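/- arXiv:2105.02614 — 4 statements merged into one kernel-verified Lean document; each statement's English description precedes it below -/
import Mathlib

section
/- Let Γ be an uncountable set and let X be a reflexive real Banach space (i.e., the canonical embedding of X into its bidual X** is surjective). Then there is no injective bounded linear operator from c₀(Γ) into X. -/
open scoped ZeroAtInfty

open scoped Classical
open Filter Topology

set_option maxHeartbeats 1000000

namespace C0Refl

variable {Γ : Type*} [TopologicalSpace Γ] [DiscreteTopology Γ]

open scoped Classical in
/-- The indicator function of a point, as an element of `C₀(Γ, ℝ)` for discrete `Γ`. -/
noncomputable def e (γ : Γ) : C₀(Γ, ℝ) where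
  toFun := fun γ' => if γ' = γ then 1 else 0
  continuous_toFun := continuous_of_discreteTopology
  zero_at_infty' := by
    rw [cocompact_eq_cofinite]
    refine Tendsto.congr' ?_ (tendsto_const_nhds (x := (0:ℝ)))
    have h1 : ∀ᶠ γ' in cofinite, γ' ∉ ({γ} : Set Γ) :=
      (Set.finite_singleton γ).eventually_cofinite_notMem
    exact h1.mono fun x hx => by simp only [Set.mem_singleton_iff] at hx; simp [hx]

lemma e_apply_self (γ : Γ) : e γ γ = 1 := by simp [e]
lemma e_apply_ne {γ γ' : Γ} (h : γ' ≠ γ) : e γ γ' = 0 := by simp [e, h]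

lemma e_ne_zero (γ : Γ) : e γ ≠ 0 := by
  intro h
  have : e γ γ = (0 : C₀(Γ, ℝ)) γ := by rw [h]
  rw [e_apply_self] at this
  simp at this

lemma sum_apply (F : Finset Γ) (s : Γ → ℝ) (γ' : Γ) :
    (∑ γ ∈ F, s γ • e γ) γ' = if γ' ∈ F then s γ' else 0 := by
  induction F using Finset.induction with
  | empty => simp
  | insert _ _ hx =>
    rename_i a F' ih
    rw [Finset.sum_insert hx]
    rw [ZeroAtInftyContinuousMap.coe_add, Pi.add_apply, ih,
      ZeroAtInftyContinuousMap.coe_smul, Pi.smul_apply]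
    by_cases h1 : γ' = a
    · subst h1
      simp [hx, e_apply_self]
    · simp only [smul_eq_mul]
      rw [e_apply_ne h1]
      simp [Finset.mem_insert, h1]

lemma norm_sum_le (F : Finset Γ) (s : Γ → ℝ) (hs : ∀ γ, |s γ| ≤ 1) :
    ‖∑ γ ∈ F, s γ • e γ‖ ≤ 1 := by
  rw [← ZeroAtInftyContinuousMap.norm_toBCF_eq_norm]
  refine (BoundedContinuousFunction.norm_le zero_le_one).2 fun γ' => ?_
  show ‖(∑ γ ∈ F, s γ • e γ) γ'‖ ≤ 1
  rw [sum_apply]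
  split
  · exact (Real.norm_eq_abs _) ▸ hs γ'
  · simp

variable {X : Type*} [NormedAddCommGroup X] [NormedSpace ℝ X]

lemma sum_abs_le (j : C₀(Γ, ℝ) →L[ℝ] X) (φ : X →L[ℝ] ℝ) (F : Finset Γ) :
    ∑ γ ∈ F, |φ (j (e γ))| ≤ ‖j‖ * ‖φ‖ := by
  set s : Γ → ℝ := fun γ => if 0 ≤ φ (j (e γ)) then 1 else -1 with hs
  have habs : ∀ γ, |φ (j (e γ))| = s γ * φ (j (e γ)) := by
    intro γ
    by_cases h : 0 ≤ φ (j (e γ))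
    · simp [hs, h, abs_of_nonneg h]
    · simp [hs, h, abs_of_neg (lt_of_not_ge h)]
  calc ∑ γ ∈ F, |φ (j (e γ))| = φ (j (∑ γ ∈ F, s γ • e γ)) := by
        rw [map_sum, map_sum]
        refine Finset.sum_congr rfl fun γ _ => ?_
        rw [habs, map_smul, map_smul]
        simp
    _ ≤ |φ (j (∑ γ ∈ F, s γ • e γ))| := le_abs_self _
    _ ≤ ‖φ‖ * ‖j (∑ γ ∈ F, s γ • e γ)‖ := φ.le_opNorm _
    _ ≤ ‖φ‖ * (‖j‖ * ‖∑ γ ∈ F, s γ • e γ‖) :=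
        mul_le_mul_of_nonneg_left (j.le_opNorm _) (norm_nonneg φ)
    _ ≤ ‖φ‖ * (‖j‖ * 1) := by
        refine mul_le_mul_of_nonneg_left ?_ (norm_nonneg φ)
        refine mul_le_mul_of_nonneg_left ?_ (norm_nonneg j)
        refine norm_sum_le F s fun γ => ?_
        by_cases h : 0 ≤ φ (j (e γ)) <;> simp [hs, h]
    _ = ‖j‖ * ‖φ‖ := by ring

lemma exists_good {C δ : ℝ} (hδ : 0 < δ) (f : Γ → Γ → ℝ)
    (hf : ∀ γ (F : Finset Γ), ∑ γ' ∈ F, |f γ γ'| ≤ C)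
    {s : Set Γ} (hs : ¬ s.Countable) :
    ∃ γ'' ∈ s, ¬ {γ ∈ s | |f γ γ''| ≤ δ}.Countable := by
  by_contra h
  push_neg at h
  -- h : ∀ γ'' ∈ s, Countable
  have hsinf : s.Infinite := fun hfin => hs hfin.countable
  obtain ⟨D, hDs, hDcard⟩ := hsinf.exists_subset_card_eq (⌈C / δ⌉₊ + 1)
  have hU : (⋃ γ'' ∈ (D : Set Γ), {γ ∈ s | |f γ γ''| ≤ δ}).Countable := by
    refine Set.Countable.biUnion (D.countable_toSet) fun γ'' hγ'' => ?_
    exact h γ'' (hDs hγ'')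
  obtain ⟨γ, hγs, hγU⟩ : ∃ γ ∈ s, γ ∉ ⋃ γ'' ∈ (D : Set Γ), {γ ∈ s | |f γ γ''| ≤ δ} := by
    by_contra hc
    push_neg at hc
    exact hs (hU.mono hc)
  have hbig : ∀ γ'' ∈ D, δ < |f γ γ''| := by
    intro γ'' hγ''
    by_contra hle
    exact hγU (Set.mem_biUnion hγ'' ⟨hγs, le_of_not_gt hle⟩)
  have h1 : (D.card : ℝ) * δ ≤ ∑ γ'' ∈ D, |f γ γ''| := by
    calc (D.card : ℝ) * δ = ∑ _γ'' ∈ D, δ := by rw [Finset.sum_const, nsmul_eq_mul]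
    _ ≤ ∑ γ'' ∈ D, |f γ γ''| := Finset.sum_le_sum fun γ'' hγ'' => (hbig γ'' hγ'').le
  have h2 : (D.card : ℝ) * δ ≤ C := h1.trans (hf γ D)
  rw [hDcard] at h2
  have h3 : C / δ < (⌈C / δ⌉₊ + 1 : ℝ) := by
    push_cast
    exact (Nat.le_ceil _).trans_lt (by linarith)
  have := (div_lt_iff₀ hδ).mp h3
  push_cast at h2
  linarith

lemma exists_next {C δ : ℝ} (hδ : 0 < δ) (f : Γ → Γ → ℝ)
    (hf : ∀ γ (F : Finset Γ), ∑ γ' ∈ F, |f γ γ'| ≤ C)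
    (hsum : ∀ γ, Summable fun γ' => f γ γ')
    {s : Set Γ} (hs : ¬ s.Countable) :
    ∃ γ'' ∈ s, ∃ s' : Set Γ, ¬ s'.Countable ∧ s' ⊆ s ∧ γ'' ∉ s' ∧
      (∀ γ ∈ s', |f γ γ''| ≤ δ ∧ f γ'' γ = 0) := by
  obtain ⟨γ'', hγ''s, hB⟩ := exists_good hδ f hf hs
  refine ⟨γ'', hγ''s, {γ ∈ s | |f γ γ''| ≤ δ} \ (Function.support (f γ'') ∪ {γ''}), ?_, ?_, ?_, ?_⟩
  · intro hc
    refine hB ?_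
    have hsupp : (Function.support (f γ'')).Countable := (hsum γ'').countable_support
    have : {γ ∈ s | |f γ γ''| ≤ δ} ⊆
        ({γ ∈ s | |f γ γ''| ≤ δ} \ (Function.support (f γ'') ∪ {γ''})) ∪
        (Function.support (f γ'') ∪ {γ''}) := by
      intro x hx
      by_cases hxs : x ∈ Function.support (f γ'') ∪ {γ''}
      · exact Or.inr hxs
      · exact Or.inl ⟨hx, hxs⟩
    exact Set.Countable.mono this (hc.union (hsupp.union (Set.countable_singleton _)))
  · exact fun γ hγ => hγ.1.1
  · exact fun hγ => hγ.2 (Or.inr rfl)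
  · intro γ hγ
    refine ⟨hγ.1.2, ?_⟩
    by_contra hne
    exact hγ.2 (Or.inl hne)

lemma exists_seq {C : ℝ} (f : Γ → Γ → ℝ) (δ : ℕ → ℝ) (hδ : ∀ n, 0 < δ n)
    (hf : ∀ γ (F : Finset Γ), ∑ γ' ∈ F, |f γ γ'| ≤ C)
    (hsum : ∀ γ, Summable fun γ' => f γ γ')
    {A : Set Γ} (hA : ¬ A.Countable) :
    ∃ g : ℕ → Γ, (∀ n, g n ∈ A) ∧ (∀ m n : ℕ, m < n →
      g m ≠ g n ∧ |f (g n) (g m)| ≤ δ m ∧ f (g m) (g n) = 0) := by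
  classical
  -- the type of states
  let T := {s : Set Γ // ¬ s.Countable ∧ s ⊆ A}
  have step : ∀ (n : ℕ) (s : T), ∃ p : Γ × T, p.1 ∈ s.1 ∧ (p.2 : T).1 ⊆ s.1 ∧
      p.1 ∉ (p.2 : T).1 ∧ ∀ γ ∈ (p.2 : T).1, |f γ p.1| ≤ δ n ∧ f p.1 γ = 0 := by
    intro n s
    obtain ⟨γ'', hγ''s, s', hs'unc, hs'sub, hγ''s', hprop⟩ :=
      exists_next (hδ n) f hf hsum s.2.1
    exact ⟨⟨γ'', ⟨s', hs'unc, hs'sub.trans s.2.2⟩⟩, hγ''s, hs'sub, hγ''s', hprop⟩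
  choose stepF hstep using step
  let base : T := ⟨A, hA, subset_rfl⟩
  let chain : ℕ → Γ × T := fun n => Nat.rec (stepF 0 base) (fun n p => stepF (n+1) p.2) n
  set g : ℕ → Γ := fun n => (chain n).1 with hg
  set S : ℕ → T := fun n => (chain n).2 with hS
  have hchain0 : chain 0 = stepF 0 base := rfl
  have hchainS : ∀ n, chain (n+1) = stepF (n+1) (S n) := fun n => rfl
  -- spec at each index
  have hspec : ∀ n, (g n ∈ (if h : n = 0 then base else S (n-1)).1) ∧ (S n).1 ⊆ (if h : n = 0 then base else S (n-1)).1 ∧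
      g n ∉ (S n).1 ∧ ∀ γ ∈ (S n).1, |f γ (g n)| ≤ δ n ∧ f (g n) γ = 0 := by
    intro n
    cases n with
    | zero => exact hstep 0 base
    | succ k => simpa using hstep (k+1) (S k)
  -- monotonicity
  have hmono : ∀ n, (S (n+1)).1 ⊆ (S n).1 := by
    intro n
    have := (hspec (n+1)).2.1
    simpa using this
  have hsub : ∀ m n, m ≤ n → (S n).1 ⊆ (S m).1 := by
    intro m n hmn
    induction n with
    | zero => simp_all
    | succ k ih =>
      rcases Nat.lt_or_ge m (k+1) with h | h
      · exact (hmono k).trans (ih (Nat.lt_succ_iff.mp h))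
      · have : m = k + 1 := le_antisymm hmn h
        subst this
        exact subset_rfl
  have hgmem : ∀ m n, m < n → g n ∈ (S m).1 := by
    intro m n hmn
    cases n with
    | zero => omega
    | succ k =>
      have h1 : g (k+1) ∈ (S k).1 := by simpa using (hspec (k+1)).1
      exact hsub m k (Nat.lt_succ_iff.mp hmn) h1
  have hginA : ∀ n, g n ∈ A := by
    intro n
    cases n with
    | zero => simpa using (hspec 0).1
    | succ k => exact (S k).2.2 (by simpa using (hspec (k+1)).1)
  refine ⟨g, hginA, fun m n hmn => ?_⟩
  have h1 := hgmem m n hmn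
  have h2 := (hspec m).2.2
  refine ⟨fun heq => h2.1 (heq ▸ h1), (h2.2 _ h1).1, (h2.2 _ h1).2⟩

lemma exists_limit_functional {X : Type*} [NormedAddCommGroup X] [NormedSpace ℝ X]
    (u : ℕ → X →L[ℝ] ℝ) (hu : ∀ n, ‖u n‖ ≤ 1) :
    ∃ Λ : X →L[ℝ] ℝ, ∀ (v : X) (r : ℝ), (∀ᶠ n in atTop, r ≤ u n v) → r ≤ Λ v := by
  set U : Ultrafilter ℕ := Ultrafilter.of atTop with hUdef
  have hU : (U : Filter ℕ) ≤ atTop := Ultrafilter.of_le atTop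
  have habs : ∀ (v : X) (n : ℕ), |u n v| ≤ ‖v‖ := by
    intro v n
    calc |u n v| ≤ ‖u n‖ * ‖v‖ := (u n).le_opNorm v
      _ ≤ 1 * ‖v‖ := mul_le_mul_of_nonneg_right (hu n) (norm_nonneg v)
      _ = ‖v‖ := one_mul _
  have hL : ∀ v : X, ∃ a : ℝ, Tendsto (fun n => u n v) U (𝓝 a) := by
    intro v
    have hmap : (U.map (fun n => u n v) : Filter ℝ) ≤ 𝓟 (Set.Icc (-‖v‖) ‖v‖) := by
      refine Filter.le_principal_iff.mpr ?_
      exact Filter.mem_map.mpr (Filter.univ_mem' fun n => abs_le.mp (habs v n))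
    obtain ⟨a, -, ha⟩ := isCompact_Icc.ultrafilter_le_nhds (U.map fun n => u n v) hmap
    exact ⟨a, ha⟩
  choose L hLspec using hL
  have hadd : ∀ v w, L (v + w) = L v + L w := by
    intro v w
    refine tendsto_nhds_unique (l := (U : Filter ℕ)) ?_ ((hLspec v).add (hLspec w))
    refine (hLspec (v + w)).congr fun n => by simp
  have hsmul : ∀ (c : ℝ) (v : X), L (c • v) = c * L v := by
    intro c v
    refine tendsto_nhds_unique (l := (U : Filter ℕ)) ?_ ((hLspec v).const_mul c)
    refine (hLspec (c • v)).congr fun n => by simp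
  have hbound : ∀ v, |L v| ≤ ‖v‖ := by
    intro v
    have h1 : Tendsto (fun n => |u n v|) U (𝓝 |L v|) := (hLspec v).abs
    exact le_of_tendsto h1 (Filter.univ_mem' fun n => habs v n)
  let Λ : X →L[ℝ] ℝ := LinearMap.mkContinuous
    { toFun := L, map_add' := hadd, map_smul' := hsmul } 1
    (fun v => by simpa using hbound v)
  refine ⟨Λ, fun v r hr => ?_⟩
  have : ∀ᶠ n in (U : Filter ℕ), r ≤ u n v := hU hr
  exact ge_of_tendsto (hLspec v) this

end C0Refl

open C0Refl

/-- There is no injective bounded linear operator from `c₀(Γ)`, `Γ` uncountable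
(realized as `C₀(Γ, ℝ)` for `Γ` discrete), into a reflexive Banach space `X`. -/
theorem no_injective_operator_c0_into_reflexive {Γ X : Type*}
    [TopologicalSpace Γ] [DiscreteTopology Γ] [Uncountable Γ]
    [NormedAddCommGroup X] [NormedSpace ℝ X] [CompleteSpace X]
    (hrefl : Function.Surjective (NormedSpace.inclusionInDoubleDual ℝ X)) :
    ¬ ∃ j : C₀(Γ, ℝ) →L[ℝ] X, Function.Injective j := by
  rintro ⟨j, hjinj⟩
  have hjne : ∀ γ : Γ, j (e γ) ≠ 0 := by
    intro γ h
    exact e_ne_zero γ (hjinj (h.trans (map_zero j).symm))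
  -- pigeonhole: an uncountable set where the norms are bounded below
  obtain ⟨m, hm⟩ : ∃ m : ℕ, ¬ {γ : Γ | 1 / (m + 1 : ℝ) ≤ ‖j (e γ)‖}.Countable := by
    by_contra h
    push_neg at h
    have hcov : (Set.univ : Set Γ) ⊆ ⋃ m : ℕ, {γ : Γ | 1 / (m + 1 : ℝ) ≤ ‖j (e γ)‖} := by
      intro γ _
      have hpos : 0 < ‖j (e γ)‖ := norm_pos_iff.mpr (hjne γ)
      obtain ⟨m, hm⟩ := exists_nat_gt (1 / ‖j (e γ)‖)
      refine Set.mem_iUnion.mpr ⟨m, ?_⟩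
      have h1 : 1 / ‖j (e γ)‖ ≤ (m + 1 : ℝ) := le_of_lt (hm.trans_le (by linarith))
      have := (div_le_iff₀ hpos).mp h1
      rw [Set.mem_setOf_eq, div_le_iff₀ (by positivity)]
      linarith
    have : (Set.univ : Set Γ).Countable :=
      Set.Countable.mono hcov (Set.countable_iUnion h)
    exact not_countable (Set.countable_univ_iff.mp this)
  set ε : ℝ := 1 / (m + 1 : ℝ) with hεdef
  have hε : 0 < ε := by positivity
  set A : Set Γ := {γ : Γ | ε ≤ ‖j (e γ)‖} with hAdef
  have hA : ¬ A.Countable := hm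
  -- supporting functionals
  have hx : ∀ γ : Γ, ∃ φ : X →L[ℝ] ℝ, ‖φ‖ ≤ 1 ∧ (γ ∈ A → ε ≤ φ (j (e γ))) := by
    intro γ
    obtain ⟨φ, hφ1, hφ2⟩ := exists_dual_vector ℝ (j (e γ)) (norm_ne_zero_iff.mpr (hjne γ))
    exact ⟨φ, le_of_eq hφ1, fun hγ => by rw [hφ2]; exact hγ⟩
  choose φ hφ1 hφ2 using hx
  set f : Γ → Γ → ℝ := fun γ γ' => φ γ (j (e γ')) with hfdef
  have hfC : ∀ γ (F : Finset Γ), ∑ γ' ∈ F, |f γ γ'| ≤ ‖j‖ := by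
    intro γ F
    calc ∑ γ' ∈ F, |f γ γ'| ≤ ‖j‖ * ‖φ γ‖ := sum_abs_le j (φ γ) F
      _ ≤ ‖j‖ * 1 := mul_le_mul_of_nonneg_left (hφ1 γ) (norm_nonneg j)
      _ = ‖j‖ := mul_one _
  have habs_sum : ∀ γ, Summable fun γ' => |f γ γ'| := fun γ =>
    summable_of_sum_le (fun γ' => abs_nonneg _) (hfC γ)
  have hsum : ∀ γ, Summable fun γ' => f γ γ' := fun γ => (habs_sum γ).of_abs
  set δ : ℕ → ℝ := fun n => ε / 8 * (1 / 2 : ℝ) ^ n with hδdef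
  have hδ : ∀ n, 0 < δ n := fun n => by positivity
  obtain ⟨g, hgA, hgprop⟩ := exists_seq f δ hδ hfC hsum hA
  have hginj : Function.Injective g := by
    intro a b hab
    by_contra hne
    rcases lt_or_gt_of_ne hne with h | h
    · exact (hgprop a b h).1 hab
    · exact (hgprop b a h).1 hab.symm
  set b : ℕ → X := fun k => j (e (g k)) with hbdef
  set u : ℕ → X →L[ℝ] ℝ := fun n => φ (g n) with hudef
  have hu : ∀ n, ‖u n‖ ≤ 1 := fun n => hφ1 (g n)
  have hdiag : ∀ n, ε ≤ u n (b n) := fun n => hφ2 (g n) (hgA n)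
  -- finite-sum bound over ℕ
  have hbnd : ∀ (ψ : X →L[ℝ] ℝ) (F : Finset ℕ), ∑ k ∈ F, |ψ (b k)| ≤ ‖j‖ * ‖ψ‖ := by
    intro ψ F
    have h1 : ∑ k ∈ F, |ψ (b k)| = ∑ γ ∈ F.image g, |ψ (j (e γ))| := by
      rw [Finset.sum_image]
      intro a _ c _ h
      exact hginj h
    rw [h1]
    exact sum_abs_le j ψ _
  have habs_b : ∀ ψ : X →L[ℝ] ℝ, Summable fun k => |ψ (b k)| := fun ψ =>
    summable_of_sum_le (fun k => abs_nonneg _) (hbnd ψ)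
  have hsum_shift : ∀ (ψ : X →L[ℝ] ℝ) (N : ℕ), Summable fun k => ψ (b (k + N)) := by
    intro ψ N
    have := ((habs_b ψ).of_abs)
    exact ((summable_nat_add_iff N).mpr this)
  -- the vectors vN
  have hv : ∀ N : ℕ, ∃ v : X, ∀ ψ : X →L[ℝ] ℝ, ψ v = ∑' k, ψ (b (k + N)) := by
    intro N
    have hΦbound : ∀ ψ : X →L[ℝ] ℝ, ‖∑' k, ψ (b (k + N))‖ ≤ ‖j‖ * ‖ψ‖ := by
      intro ψ
      have h1 : ‖∑' k, ψ (b (k + N))‖ ≤ ∑' k, ‖ψ (b (k + N))‖ := by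
        refine norm_tsum_le_tsum_norm ?_
        simpa [Real.norm_eq_abs] using (summable_nat_add_iff N).mpr (habs_b ψ)
      refine h1.trans ?_
      refine Summable.tsum_le_of_sum_le (by simpa [Real.norm_eq_abs] using (summable_nat_add_iff N).mpr (habs_b ψ)) ?_
      intro F
      have h2 : ∑ k ∈ F, ‖ψ (b (k + N))‖ = ∑ k' ∈ F.image (· + N), |ψ (b k')| := by
        rw [Finset.sum_image (by intro a _ c _ h; beta_reduce at h; omega)]
        simp [Real.norm_eq_abs]
      rw [h2]
      exact hbnd ψ _
    set Φ : StrongDual ℝ (StrongDual ℝ X) := LinearMap.mkContinuous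
      { toFun := fun ψ => ∑' k, ψ (b (k + N))
        map_add' := by
          intro ψ₁ ψ₂
          simp only [ContinuousLinearMap.add_apply]
          exact Summable.tsum_add (hsum_shift ψ₁ N) (hsum_shift ψ₂ N)
        map_smul' := by
          intro c ψ
          simp only [ContinuousLinearMap.coe_smul', Pi.smul_apply, smul_eq_mul, RingHom.id_apply]
          exact tsum_mul_left }
      ‖j‖ (fun ψ => hΦbound ψ) with hΦdef
    obtain ⟨v, hveq⟩ := hrefl Φ
    refine ⟨v, fun ψ => ?_⟩
    have h3 : NormedSpace.inclusionInDoubleDual ℝ X v ψ = Φ ψ := by rw [hveq]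
    rw [NormedSpace.dual_def] at h3
    exact h3
  choose v hvspec using hv
  -- limit functional
  obtain ⟨Λ, hΛ⟩ := exists_limit_functional u hu
  -- lower bound
  have hlow : ∀ N : ℕ, ε - ε / 4 ≤ Λ (v N) := by
    intro N
    refine hΛ (v N) (ε - ε / 4) ?_
    refine eventually_atTop.mpr ⟨N, fun n hn => ?_⟩
    have hvn : u n (v N) = ∑' k, u n (b (k + N)) := hvspec N (u n)
    set c : ℕ → ℝ := fun k => u n (b (k + N)) with hcdef
    have hc : Summable c := hsum_shift (u n) N
    set n0 : ℕ := n - N with hn0def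
    have hn0 : n0 + N = n := by omega
    have hsplit : ∑' k, c k = c n0 + ∑' k, ite (k = n0) 0 (c k) :=
      Summable.tsum_eq_add_tsum_ite hc n0
    have hcn0 : ε ≤ c n0 := by
      have : c n0 = u n (b n) := by rw [hcdef]; simp [hn0]
      rw [this]
      exact hdiag n
    -- bound the remainder
    have hremsummable : Summable fun k => |ite (k = n0) 0 (c k)| := by
      refine Summable.of_nonneg_of_le (fun k => abs_nonneg _) (fun k => ?_) hc.abs
      by_cases h : k = n0 <;> simp [h, abs_nonneg]
    have hδshift : Summable fun k : ℕ => δ (k + N) := by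
      refine (summable_nat_add_iff N).mpr ?_
      exact (summable_geometric_of_lt_one (by norm_num) (by norm_num)).mul_left _
    have hptwise : ∀ k, |ite (k = n0) 0 (c k)| ≤ δ (k + N) := by
      intro k
      by_cases h : k = n0
      · subst h
        rw [if_pos rfl, abs_zero]
        exact (hδ _).le
      · simp only [h, if_false]
        have hkN : k + N ≠ n := by omega
        rcases lt_or_gt_of_ne hkN with hlt | hgt
        · exact (hgprop (k + N) n hlt).2.1
        · have := (hgprop n (k + N) hgt).2.2
          rw [hcdef]
          simp only
          rw [show u n (b (k + N)) = f (g n) (g (k + N)) from rfl, this]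
          simp [(hδ (k + N)).le]
    have hrem : |∑' k, ite (k = n0) 0 (c k)| ≤ ε / 4 := by
      have h1 : |∑' k, ite (k = n0) 0 (c k)| ≤ ∑' k, |ite (k = n0) 0 (c k)| := by
        have := norm_tsum_le_tsum_norm (f := fun k => ite (k = n0) (0:ℝ) (c k))
          (by simpa [Real.norm_eq_abs] using hremsummable)
        simpa [Real.norm_eq_abs] using this
      refine h1.trans ?_
      have h2 : ∑' k, |ite (k = n0) 0 (c k)| ≤ ∑' k, δ (k + N) :=
        Summable.tsum_le_tsum hptwise hremsummable hδshift
      refine h2.trans ?_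
      have h3 : ∑' k : ℕ, δ (k + N) = (ε / 8 * (1 / 2 : ℝ) ^ N) * (1 - 1/2)⁻¹ := by
        have : ∀ k : ℕ, δ (k + N) = (ε / 8 * (1 / 2 : ℝ) ^ N) * (1 / 2 : ℝ) ^ k := by
          intro k
          rw [hδdef]
          simp only
          rw [pow_add]
          ring
        rw [tsum_congr this, tsum_mul_left, tsum_geometric_of_lt_one (by norm_num) (by norm_num)]
      rw [h3]
      have h4 : ((1 : ℝ) / 2) ^ N ≤ 1 := pow_le_one₀ (by norm_num) (by norm_num)
      norm_num
      nlinarith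
    have : ε - ε / 4 ≤ c n0 + ∑' k, ite (k = n0) 0 (c k) := by
      have := neg_abs_le (∑' k, ite (k = n0) 0 (c k))
      linarith
    rw [hvn, hsplit]
    exact this
  -- upper bound: tends to zero
  have htendsto : Tendsto (fun N => Λ (v N)) atTop (𝓝 0) := by
    have h1 : (fun N => Λ (v N)) = fun N => ∑' k, Λ (b (k + N)) := by
      funext N
      exact hvspec N Λ
    rw [h1]
    exact tendsto_sum_nat_add fun k => Λ (b k)
  have hcontr : ∀ᶠ N in atTop, Λ (v N) < ε - ε / 4 := by
    have hlt : (0 : ℝ) < ε - ε / 4 := by linarith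
    exact htendsto.eventually_lt_const hlt
  obtain ⟨N, hN⟩ := hcontr.exists
  exact absurd (hlow N) (not_le.mpr hN)
end

section
/- Let (M,d) be a compact metric space with base point p satisfying condition (B'). Let L = (M × M) \ Δ_M be the off-diagonal, Λ = {ΦF : F Lipschitz on M, F(p) = 0} ⊆ C_b(L) and λ = Λ ∩ C₀(L), where (ΦF)(s,t) = (F(s) − F(t))/d(s,t). Then λ is an M-ideal in Λ. -/
/-- The off-diagonal `L = (M × M) \ Δ_M`. -/
abbrev OffDiag (M : Type*) [MetricSpace M] : Type _ := {q : M × M // q.1 ≠ q.2}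

/-- A function is little Lipschitz if for every `ε > 0` there is `δ > 0` such that
`|f s - f t| ≤ ε * dist s t` whenever `dist s t < δ`. -/
def LittleLip {M : Type*} [MetricSpace M] (f : M → ℝ) : Prop :=
  ∀ ε > (0 : ℝ), ∃ δ > (0 : ℝ), ∀ s t : M, dist s t < δ → |f s - f t| ≤ ε * dist s t

/-- The image `Λ` of `Lip₀(M)` in `C_b(L)` under the de Leeuw transform
`(Φ F)(s,t) = (F s - F t) / dist s t`. -/
def deLeeuwSubmodule (M : Type*) [MetricSpace M] (p : M) :
    Submodule ℝ (BoundedContinuousFunction (OffDiag M) ℝ) where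
  carrier := {h | ∃ F : M → ℝ, F p = 0 ∧ (∃ K : ℝ, ∀ s t : M, |F s - F t| ≤ K * dist s t) ∧
      ∀ q : OffDiag M, h q = (F q.1.1 - F q.1.2) / dist q.1.1 q.1.2}
  zero_mem' := ⟨fun _ => 0, rfl, ⟨0, fun s t => by simp⟩, fun q => by simp⟩
  add_mem' := by
    rintro h₁ h₂ ⟨F, hFp, ⟨K₁, hK₁⟩, hF⟩ ⟨G, hGp, ⟨K₂, hK₂⟩, hG⟩
    refine ⟨fun t => F t + G t, by simp [hFp, hGp], ⟨K₁ + K₂, fun s t => ?_⟩, fun q => ?_⟩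
    · calc |F s + G s - (F t + G t)| = |(F s - F t) + (G s - G t)| := by congr 1; ring
        _ ≤ |F s - F t| + |G s - G t| := abs_add_le _ _
        _ ≤ K₁ * dist s t + K₂ * dist s t := add_le_add (hK₁ s t) (hK₂ s t)
        _ = (K₁ + K₂) * dist s t := by ring
    · rw [BoundedContinuousFunction.add_apply, hF q, hG q]
      ring
  smul_mem' := by
    rintro c h ⟨F, hFp, ⟨K, hK⟩, hF⟩
    refine ⟨fun t => c * F t, by simp [hFp], ⟨|c| * K, fun s t => ?_⟩, fun q => ?_⟩
    · calc |c * F s - c * F t| = |c| * |F s - F t| := by rw [← abs_mul]; congr 1; ring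
        _ ≤ |c| * (K * dist s t) := mul_le_mul_of_nonneg_left (hK s t) (abs_nonneg c)
        _ = |c| * K * dist s t := by ring
    · have : (c • h) q = c * h q := by
        rw [BoundedContinuousFunction.coe_smul]; simp
      rw [this, hF q]
      ring

/-- A subset `E₀` of a Banach space `E` is an *M-ideal* in `E` if there is a bounded linear
projection `P` on the dual `E*` whose kernel is the annihilator of `E₀` and which satisfies
`‖φ‖ = ‖P φ‖ + ‖φ - P φ‖` for every `φ ∈ E*`. -/
def IsMIdeal {E : Type*} [NormedAddCommGroup E] [NormedSpace ℝ E] (E₀ : Set E) : Prop :=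
  ∃ P : (E →L[ℝ] ℝ) →L[ℝ] (E →L[ℝ] ℝ),
    (∀ φ, P (P φ) = P φ) ∧
    (∀ φ, P φ = 0 ↔ ∀ y ∈ E₀, φ y = 0) ∧
    (∀ φ, ‖φ‖ = ‖P φ‖ + ‖φ - P φ‖)

/-- A bounded continuous function vanishes at infinity if `{t | ε ≤ ‖f t‖}` is compact
for every `ε > 0`. -/
def ZeroAtInfty {L Y : Type*} [TopologicalSpace L] [NormedAddCommGroup Y]
    (f : BoundedContinuousFunction L Y) : Prop :=
  ∀ ε > (0 : ℝ), IsCompact {t : L | ε ≤ ‖f t‖}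


/-- the dual of a normed space (formerly `NormedSpace.Dual`) -/
abbrev NDual (E : Type*) [NormedAddCommGroup E] [NormedSpace ℝ E] : Type _ := E →L[ℝ] ℝ

set_option linter.unusedSectionVars false

namespace MI

variable {M : Type*} [MetricSpace M] [CompactSpace M] {p : M}

local notation "B" => BoundedContinuousFunction (OffDiag M) ℝ

/-- distance to diagonal -/
abbrev dd (q : OffDiag M) : ℝ := dist q.1.1 q.1.2

lemma dd_pos (q : OffDiag M) : 0 < dd q := dist_pos.2 q.2

lemma dd_cont : Continuous (dd (M := M)) :=
  Continuous.dist (continuous_fst.comp continuous_subtype_val)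
    (continuous_snd.comp continuous_subtype_val)

lemma lip_continuous (f : M → ℝ) (K : ℝ) (hK : ∀ s t, |f s - f t| ≤ K * dist s t) :
    Continuous f :=
  (LipschitzWith.of_dist_le_mul (K := ⟨max K 0, le_max_right _ _⟩) (fun s t => by
    rw [Real.dist_eq]
    exact le_trans (hK s t) (mul_le_mul_of_nonneg_right (le_max_left _ _) dist_nonneg))).continuous

/-- Build the BCF `ΦF` from a Lipschitz function. -/
noncomputable def mkB (f : M → ℝ) (K : ℝ) (hK : ∀ s t, |f s - f t| ≤ K * dist s t)
    (hK0 : 0 ≤ K) : B :=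
  BoundedContinuousFunction.ofNormedAddCommGroup
    (fun q => (f q.1.1 - f q.1.2) / dist q.1.1 q.1.2)
    (by
      apply Continuous.div
      · exact ((lip_continuous f K hK).comp (continuous_fst.comp continuous_subtype_val)).sub
          ((lip_continuous f K hK).comp (continuous_snd.comp continuous_subtype_val))
      · exact dd_cont
      · exact fun q => ne_of_gt (dd_pos q))
    K
    (by
      intro q
      have hd : (0:ℝ) < dist q.1.1 q.1.2 := dd_pos q
      rw [Real.norm_eq_abs, abs_div, abs_of_pos hd, div_le_iff₀ hd]
      exact hK _ _)

lemma mkB_apply (f : M → ℝ) (K hK hK0) (q : OffDiag M) :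
    mkB f K hK hK0 q = (f q.1.1 - f q.1.2) / dist q.1.1 q.1.2 := rfl

lemma norm_mkB_le (f : M → ℝ) (K hK hK0) : ‖mkB f K hK hK0‖ ≤ K :=
  BoundedContinuousFunction.norm_ofNormedAddCommGroup_le _ hK0 _

variable (p) in
/-- Build an element of `Λ`. -/
noncomputable def mkE (f : M → ℝ) (hp : f p = 0) (K : ℝ)
    (hK : ∀ s t, |f s - f t| ≤ K * dist s t) (hK0 : 0 ≤ K) : ↥(deLeeuwSubmodule M p) :=
  ⟨mkB f K hK hK0, ⟨f, hp, ⟨K, hK⟩, fun q => rfl⟩⟩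

lemma mkE_coe_apply (f : M → ℝ) (hp K hK hK0) (q : OffDiag M) :
    ((mkE p f hp K hK hK0 : ↥(deLeeuwSubmodule M p)) : B) q
      = (f q.1.1 - f q.1.2) / dist q.1.1 q.1.2 := rfl

lemma norm_mkE_le (f : M → ℝ) (hp K hK hK0) : ‖mkE p f hp K hK hK0‖ ≤ K :=
  norm_mkB_le f K hK hK0

/-- canonical representative -/
noncomputable def rep (h : ↥(deLeeuwSubmodule M p)) : M → ℝ :=
  (h.2 : ∃ F : M → ℝ, F p = 0 ∧ (∃ K : ℝ, ∀ s t : M, |F s - F t| ≤ K * dist s t) ∧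
      ∀ q : OffDiag M, (h : B) q = (F q.1.1 - F q.1.2) / dist q.1.1 q.1.2).choose

lemma rep_spec (h : ↥(deLeeuwSubmodule M p)) :
    rep h p = 0 ∧ (∃ K : ℝ, ∀ s t : M, |rep h s - rep h t| ≤ K * dist s t) ∧
      ∀ q : OffDiag M, (h : B) q = (rep h q.1.1 - rep h q.1.2) / dist q.1.1 q.1.2 :=
  (h.2 : ∃ F : M → ℝ, _).choose_spec

lemma rep_p (h : ↥(deLeeuwSubmodule M p)) : rep h p = 0 := (rep_spec h).1

lemma rep_eq (h : ↥(deLeeuwSubmodule M p)) (q : OffDiag M) :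
    (h : B) q = (rep h q.1.1 - rep h q.1.2) / dist q.1.1 q.1.2 := (rep_spec h).2.2 q

lemma coe_norm (h : ↥(deLeeuwSubmodule M p)) : ‖h‖ = ‖(h : B)‖ := rfl

lemma delta_eq (h : ↥(deLeeuwSubmodule M p)) (s t : M) (hst : s ≠ t) :
    rep h s - rep h t = (h : B) ⟨(s, t), hst⟩ * dist s t := by
  have hd : (0:ℝ) < dist s t := dist_pos.2 hst
  rw [rep_eq h ⟨(s, t), hst⟩]
  field_simp

lemma rep_lip (h : ↥(deLeeuwSubmodule M p)) (s t : M) :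
    |rep h s - rep h t| ≤ ‖h‖ * dist s t := by
  rcases eq_or_ne s t with rfl | hst
  · simp
  · rw [delta_eq h s t hst, abs_mul, abs_of_nonneg (dist_nonneg : (0:ℝ) ≤ dist s t)]
    exact mul_le_mul_of_nonneg_right
      ((h : B).norm_coe_le_norm ⟨(s, t), hst⟩) dist_nonneg

/-- uniqueness of representatives -/
lemma rep_unique (h : ↥(deLeeuwSubmodule M p)) (f : M → ℝ) (hfp : f p = 0)
    (hf : ∀ q : OffDiag M, (h : B) q = (f q.1.1 - f q.1.2) / dist q.1.1 q.1.2) :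
    rep h = f := by
  funext t
  rcases eq_or_ne t p with rfl | htp
  · rw [rep_p, hfp]
  · have hd : (0:ℝ) < dist t p := dist_pos.2 htp
    have h1 := rep_eq h ⟨(t, p), htp⟩
    have h2 := hf ⟨(t, p), htp⟩
    rw [h1] at h2
    rw [div_eq_div_iff (ne_of_gt hd) (ne_of_gt hd)] at h2
    have : rep h t - rep h p = f t - f p := by
      have := mul_right_cancel₀ (ne_of_gt hd) h2
      exact this
    rw [rep_p, hfp] at this
    linarith

lemma rep_mkE (f : M → ℝ) (hp K hK hK0) : rep (mkE p f hp K hK hK0) = f :=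
  rep_unique _ f hp (fun _ => rfl)

lemma rep_sub (h₁ h₂ : ↥(deLeeuwSubmodule M p)) :
    rep (h₁ - h₂) = fun t => rep h₁ t - rep h₂ t := by
  apply rep_unique
  · rw [rep_p, rep_p]; ring
  · intro q
    have : ((h₁ - h₂ : ↥(deLeeuwSubmodule M p)) : B) q = (h₁ : B) q - (h₂ : B) q := rfl
    rw [this, rep_eq h₁ q, rep_eq h₂ q]
    have hd : (0:ℝ) < dist q.1.1 q.1.2 := dd_pos q
    field_simp
    ring

lemma rep_add (h₁ h₂ : ↥(deLeeuwSubmodule M p)) :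
    rep (h₁ + h₂) = fun t => rep h₁ t + rep h₂ t := by
  apply rep_unique
  · rw [rep_p, rep_p]; ring
  · intro q
    have : ((h₁ + h₂ : ↥(deLeeuwSubmodule M p)) : B) q = (h₁ : B) q + (h₂ : B) q := rfl
    rw [this, rep_eq h₁ q, rep_eq h₂ q]
    have hd : (0:ℝ) < dist q.1.1 q.1.2 := dd_pos q
    field_simp
    ring

lemma rep_smul (c : ℝ) (h : ↥(deLeeuwSubmodule M p)) :
    rep (c • h) = fun t => c * rep h t := by
  apply rep_unique
  · rw [rep_p]; ring
  · intro q
    have : ((c • h : ↥(deLeeuwSubmodule M p)) : B) q = c * (h : B) q := rfl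
    rw [this, rep_eq h q]
    have hd : (0:ℝ) < dist q.1.1 q.1.2 := dd_pos q
    field_simp

end MI

namespace MI2
open MI
variable {M : Type*} [MetricSpace M] [CompactSpace M] {p : M}
local notation "B" => BoundedContinuousFunction (OffDiag M) ℝ

lemma littleLip_add {f g : M → ℝ} (hf : LittleLip f) (hg : LittleLip g) :
    LittleLip (fun t => f t + g t) := by
  intro ε hε
  obtain ⟨δ₁, hδ₁, h₁⟩ := hf (ε/2) (by linarith)
  obtain ⟨δ₂, hδ₂, h₂⟩ := hg (ε/2) (by linarith)
  refine ⟨min δ₁ δ₂, lt_min hδ₁ hδ₂, fun s t hst => ?_⟩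
  have e₁ := h₁ s t (lt_of_lt_of_le hst (min_le_left _ _))
  have e₂ := h₂ s t (lt_of_lt_of_le hst (min_le_right _ _))
  calc |f s + g s - (f t + g t)| = |(f s - f t) + (g s - g t)| := by ring_nf
    _ ≤ |f s - f t| + |g s - g t| := abs_add_le _ _
    _ ≤ ε/2 * dist s t + ε/2 * dist s t := add_le_add e₁ e₂
    _ = ε * dist s t := by ring

lemma littleLip_smul (c : ℝ) {f : M → ℝ} (hf : LittleLip f) :
    LittleLip (fun t => c * f t) := by
  intro ε hε
  have hc : 0 < |c| + 1 := by positivity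
  obtain ⟨δ, hδ, h⟩ := hf (ε / (|c| + 1)) (by positivity)
  refine ⟨δ, hδ, fun s t hst => ?_⟩
  have := h s t hst
  calc |c * f s - c * f t| = |c| * |f s - f t| := by rw [← abs_mul]; ring_nf
    _ ≤ |c| * (ε / (|c| + 1) * dist s t) :=
        mul_le_mul_of_nonneg_left this (abs_nonneg c)
    _ ≤ ε * dist s t := by
        have h1 : |c| * (ε / (|c| + 1)) ≤ ε := by
          rw [mul_div_assoc']
          rw [div_le_iff₀ hc]
          nlinarith [abs_nonneg c]
        nlinarith [dist_nonneg (x := s) (y := t), abs_nonneg c]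

lemma littleLip_neg {f : M → ℝ} (hf : LittleLip f) : LittleLip (fun t => -f t) := by
  have := littleLip_smul (-1) hf
  simpa using this

lemma littleLip_sub {f g : M → ℝ} (hf : LittleLip f) (hg : LittleLip g) :
    LittleLip (fun t => f t - g t) := by
  have := littleLip_add hf (littleLip_neg hg)
  simpa [sub_eq_add_neg] using this

lemma littleLip_zero : LittleLip (fun _ : M => (0:ℝ)) :=
  fun ε hε => ⟨1, one_pos, fun s t _ => by
    simpa using mul_nonneg (le_of_lt hε) (dist_nonneg (x := s) (y := t))⟩

lemma littleLip_sum {ι : Type*} (s : Finset ι) (f : ι → M → ℝ)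
    (hf : ∀ i ∈ s, LittleLip (f i)) : LittleLip (fun t => ∑ i ∈ s, f i t) := by
  classical
  induction s using Finset.induction with
  | empty => simpa using littleLip_zero
  | @insert a s' hx hxx =>
    have h1 : LittleLip (f a) := hf a (Finset.mem_insert_self a s')
    have h2 : LittleLip (fun t => ∑ i ∈ s', f i t) :=
      hxx (fun i hi => hf i (Finset.mem_insert_of_mem hi))
    have := littleLip_add h1 h2
    refine fun ε hε => ?_
    obtain ⟨δ, hδ, hh⟩ := this ε hε
    refine ⟨δ, hδ, fun u v huv => ?_⟩
    simpa [Finset.sum_insert hx] using hh u v huv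

/-- little implies vanishing at infinity -/
lemma zeroAtInfty_of_little (h : ↥(deLeeuwSubmodule M p)) (hl : LittleLip (rep h)) :
    ZeroAtInfty (h : B) := by
  intro ε hε
  obtain ⟨δ, hδ, hd⟩ := hl (ε/2) (by linarith)
  have hset : {q : OffDiag M | ε ≤ ‖(h : B) q‖}
      = Subtype.val ⁻¹' {x : M × M | δ ≤ dist x.1 x.2 ∧ ε * dist x.1 x.2 ≤ |rep h x.1 - rep h x.2|} := by
    ext q
    simp only [Set.mem_setOf_eq, Set.mem_preimage]
    constructor
    · intro hq
      have hdq : (0:ℝ) < dist q.1.1 q.1.2 := dd_pos q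
      have heq : ‖(h : B) q‖ = |rep h q.1.1 - rep h q.1.2| / dist q.1.1 q.1.2 := by
        rw [rep_eq h q, Real.norm_eq_abs, abs_div, abs_of_pos hdq]
      rw [heq] at hq
      have h2 : ε * dist q.1.1 q.1.2 ≤ |rep h q.1.1 - rep h q.1.2| := by
        rw [le_div_iff₀ hdq] at hq
        linarith [hq]
      constructor
      · by_contra hcon
        push_neg at hcon
        have := hd q.1.1 q.1.2 hcon
        nlinarith
      · exact h2
    · rintro ⟨h1, h2⟩
      have hdq : (0:ℝ) < dist q.1.1 q.1.2 := dd_pos q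
      have heq : ‖(h : B) q‖ = |rep h q.1.1 - rep h q.1.2| / dist q.1.1 q.1.2 := by
        rw [rep_eq h q, Real.norm_eq_abs, abs_div, abs_of_pos hdq]
      rw [heq, le_div_iff₀ hdq]
      nlinarith
  rw [hset]
  rw [Subtype.isCompact_iff]
  have hcl : IsClosed {x : M × M | δ ≤ dist x.1 x.2 ∧ ε * dist x.1 x.2 ≤ |rep h x.1 - rep h x.2|} := by
    have hc1 : Continuous fun x : M × M => dist x.1 x.2 := continuous_fst.dist continuous_snd
    have hrepc : Continuous (rep h) := by
      obtain ⟨K, hK⟩ := (rep_spec h).2.1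
      exact lip_continuous _ K hK
    have hc2 : Continuous fun x : M × M => |rep h x.1 - rep h x.2| :=
      ((hrepc.comp continuous_fst).sub (hrepc.comp continuous_snd)).abs
    exact (isClosed_le continuous_const hc1).inter
      (isClosed_le (continuous_const.mul hc1) hc2)
  rw [Set.image_preimage_eq_inter_range, Subtype.range_coe_subtype]
  have hss : {x : M × M | δ ≤ dist x.1 x.2 ∧ ε * dist x.1 x.2 ≤ |rep h x.1 - rep h x.2|}
      ∩ {x : M × M | x.1 ≠ x.2}
      = {x : M × M | δ ≤ dist x.1 x.2 ∧ ε * dist x.1 x.2 ≤ |rep h x.1 - rep h x.2|} := by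
    apply Set.inter_eq_self_of_subset_left
    intro x hx
    simp only [Set.mem_setOf_eq] at hx ⊢
    intro hcon
    rw [hcon] at hx
    simp at hx
    linarith [hx, hδ]
  rw [hss]
  exact hcl.isCompact

/-- vanishing at infinity implies little -/
lemma little_of_zeroAtInfty (h : ↥(deLeeuwSubmodule M p)) (hz : ZeroAtInfty (h : B)) :
    LittleLip (rep h) := by
  intro ε hε
  have hc := hz ε hε
  by_cases hne : {q : OffDiag M | ε ≤ ‖(h : B) q‖}.Nonempty
  · obtain ⟨q₀, hq₀, hmin⟩ := hc.exists_isMinOn hne (dd_cont.continuousOn)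
    have hα : (0:ℝ) < dd q₀ := dd_pos q₀
    refine ⟨dd q₀, hα, fun s t hst => ?_⟩
    rcases eq_or_ne s t with rfl | hne'
    · simp [mul_nonneg (le_of_lt hε) dist_nonneg]
    · set q : OffDiag M := ⟨(s, t), hne'⟩
      have : q ∉ {q : OffDiag M | ε ≤ ‖(h : B) q‖} := by
        intro hmem
        have := hmin hmem
        simp only [dd] at this hst
        exact absurd hst (not_lt.2 this)
      simp only [Set.mem_setOf_eq, not_le] at this
      have heq := delta_eq h s t hne'
      rw [heq, abs_mul, abs_of_nonneg (dist_nonneg : (0:ℝ) ≤ dist s t)]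
      have : |(h : B) q| < ε := by rwa [Real.norm_eq_abs] at this
      exact mul_le_mul_of_nonneg_right (le_of_lt this) dist_nonneg
  · rw [Set.not_nonempty_iff_eq_empty] at hne
    refine ⟨1, one_pos, fun s t _ => ?_⟩
    rcases eq_or_ne s t with rfl | hne'
    · simp [mul_nonneg (le_of_lt hε) dist_nonneg]
    · set q : OffDiag M := ⟨(s, t), hne'⟩
      have : q ∉ ({q : OffDiag M | ε ≤ ‖(h : B) q‖}) := by rw [hne]; exact Set.notMem_empty q
      simp only [Set.mem_setOf_eq, not_le, Real.norm_eq_abs] at this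
      rw [delta_eq h s t hne', abs_mul, abs_of_nonneg (dist_nonneg : (0:ℝ) ≤ dist s t)]
      exact mul_le_mul_of_nonneg_right (le_of_lt this) dist_nonneg

end MI2

namespace MI3
open MI MI2
variable {M : Type*} [MetricSpace M] [CompactSpace M]
local notation "B" => BoundedContinuousFunction (OffDiag M) ℝ

/-- The gliding hump lemma. -/
lemma GH0 (Ψ : B →L[ℝ] ℝ) (a C : ℝ) (ha : 0 < a) (hC : 0 ≤ C)
    (Hyp : ∀ β > (0:ℝ), ∀ ε' > (0:ℝ), ∃ u : B,
      (∃ α > (0:ℝ), ∀ q, dd q < α → |u q| ≤ ε') ∧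
      (∀ q, β ≤ dd q → |u q| ≤ ε') ∧ ‖u‖ ≤ C ∧ a ≤ |Ψ u|) : False := by
  classical
  set ε₀ : ℝ := a / (2 * (‖Ψ‖ + 1)) with hε₀def
  have hΨ1 : (0:ℝ) < ‖Ψ‖ + 1 := by positivity
  have hε₀ : 0 < ε₀ := by positivity
  have hΨε₀ : ‖Ψ‖ * ε₀ ≤ a / 2 := by
    rw [hε₀def, ← mul_div_assoc, div_le_div_iff₀ (by positivity) (by norm_num : (0:ℝ) < 2)]
    have := norm_nonneg Ψ
    nlinarith
  have key : ∀ b : {b : ℝ // 0 < b}, ∃ w : B × {b : ℝ // 0 < b},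
      (∀ q, dd q < 4 * w.2.1 → |w.1 q| ≤ ε₀) ∧
      (∀ q, b.1 / 4 ≤ dd q → |w.1 q| ≤ ε₀) ∧
      ‖w.1‖ ≤ C ∧ a ≤ |Ψ w.1| ∧ 8 * w.2.1 ≤ b.1 := by
    rintro ⟨b, hb⟩
    obtain ⟨u, ⟨α, hα, hu1⟩, hu2, hu3, hu4⟩ := Hyp (b/4) (by linarith) ε₀ hε₀
    refine ⟨⟨u, ⟨min (α/4) (b/8), by positivity⟩⟩, fun q hq => hu1 q ?_, hu2, hu3, hu4, ?_⟩
    · have h1 := min_le_left (α/4) (b/8)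
      simp only at hq
      linarith
    · have := min_le_right (α/4) (b/8)
      simp only
      linarith
  choose stepfn hstep using key
  let seq : ℕ → B × {b : ℝ // 0 < b} :=
    fun k => Nat.rec ((0:B), ⟨1, one_pos⟩) (fun _ ih => stepfn ih.2) k
  set β : ℕ → ℝ := fun k => (seq k).2.1 with hβdef
  set u : ℕ → B := fun k => (seq (k+1)).1 with hudef
  have hβpos : ∀ k, 0 < β k := fun k => (seq k).2.2
  have spec : ∀ k, (∀ q, dd q < 4 * β (k+1) → |u k q| ≤ ε₀) ∧
      (∀ q, β k / 4 ≤ dd q → |u k q| ≤ ε₀) ∧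
      ‖u k‖ ≤ C ∧ a ≤ |Ψ (u k)| ∧ 8 * β (k+1) ≤ β k := fun k => hstep (seq k).2
  have hβdec : ∀ k, β (k+1) ≤ β k := by
    intro k
    have h1 := (spec k).2.2.2.2
    have h2 := hβpos (k+1)
    linarith
  have hβmono : ∀ j k, j ≤ k → β k ≤ β j := fun j k hjk => antitone_nat_of_succ_le hβdec hjk
  -- the cutoffs
  set χ : ℕ → OffDiag M → ℝ := fun k q =>
    max 0 (min ((dd q - β (k+1)) / β (k+1)) (min 1 ((β k / 2 - dd q) / (β k / 4)))) with hχdef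
  have χnonneg : ∀ k q, 0 ≤ χ k q := fun k q => le_max_left _ _
  have χle1 : ∀ k q, χ k q ≤ 1 := by
    intro k q
    apply max_le (by norm_num)
    exact le_trans (min_le_right _ _) (min_le_left _ _)
  have χzlo : ∀ k q, dd q ≤ β (k+1) → χ k q = 0 := by
    intro k q hq
    apply max_eq_left
    apply le_trans (min_le_left _ _)
    apply div_nonpos_of_nonpos_of_nonneg (by linarith) (le_of_lt (hβpos (k+1)))
  have χzhi : ∀ k q, β k / 2 ≤ dd q → χ k q = 0 := by
    intro k q hq
    apply max_eq_left
    apply le_trans (min_le_right _ _)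
    apply le_trans (min_le_right _ _)
    apply div_nonpos_of_nonpos_of_nonneg (by linarith)
    have := hβpos k; linarith
  have χone : ∀ k q, 2 * β (k+1) ≤ dd q → dd q ≤ β k / 4 → χ k q = 1 := by
    intro k q h1 h2
    have hb1 := hβpos (k+1)
    have hb := hβpos k
    have e1 : (1:ℝ) ≤ (dd q - β (k+1)) / β (k+1) := by
      rw [le_div_iff₀ hb1]; linarith
    have e2 : (1:ℝ) ≤ (β k / 2 - dd q) / (β k / 4) := by
      rw [le_div_iff₀ (by linarith)]; linarith
    have : min ((dd q - β (k+1)) / β (k+1)) (min 1 ((β k / 2 - dd q) / (β k / 4))) = 1 := by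
      rw [min_eq_right]
      · rw [min_eq_left e2]
      · rw [min_eq_left e2]; exact e1
    rw [hχdef]
    simp only
    rw [this]
    exact max_eq_right (by norm_num)
  have χsupp : ∀ k q, χ k q ≠ 0 → β (k+1) < dd q ∧ dd q < β k / 2 := by
    intro k q hne
    constructor
    · by_contra hc; push_neg at hc; exact hne (χzlo k q hc)
    · by_contra hc; push_neg at hc; exact hne (χzhi k q hc)
  have χcont : ∀ k, Continuous (χ k) := by
    intro k
    apply Continuous.max continuous_const
    apply Continuous.min
    · exact (dd_cont.sub continuous_const).div_const _
    · exact Continuous.min continuous_const ((continuous_const.sub dd_cont).div_const _)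
  -- signs
  set sg : ℕ → ℝ := fun k => if 0 ≤ Ψ (u k) then 1 else -1 with hsgdef
  have hsgabs : ∀ k, |sg k| = 1 := by
    intro k; rw [hsgdef]; simp only
    split <;> simp
  have hsgmul : ∀ k, sg k * Ψ (u k) = |Ψ (u k)| := by
    intro k; rw [hsgdef]; simp only
    split
    · rename_i h; rw [abs_of_nonneg h]; ring
    · rename_i h; push_neg at h; rw [abs_of_neg h]; ring
  -- the disjointly supported pieces
  have vbound : ∀ k q, |sg k * (u k q * χ k q)| ≤ C := by
    intro k q
    rw [abs_mul, hsgabs k, one_mul, abs_mul]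
    have h1 : |u k q| ≤ C := le_trans (by
      have := (u k).norm_coe_le_norm q
      rwa [Real.norm_eq_abs] at this) ((spec k).2.2.1)
    have h2 : |χ k q| ≤ 1 := by
      rw [abs_of_nonneg (χnonneg k q)]; exact χle1 k q
    calc |u k q| * |χ k q| ≤ C * 1 := by
          apply mul_le_mul h1 h2 (abs_nonneg _) hC
      _ = C := by ring
  set v : ℕ → B := fun k => BoundedContinuousFunction.ofNormedAddCommGroup
    (fun q => sg k * (u k q * χ k q))
    (continuous_const.mul ((u k).continuous.mul (χcont k))) C
    (fun q => by rw [Real.norm_eq_abs]; exact vbound k q) with hvdef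
  have hvapp : ∀ k q, v k q = sg k * (u k q * χ k q) := fun k q => rfl
  -- the norm bound for partial sums
  have normS : ∀ m, ‖∑ k ∈ Finset.range m, v k‖ ≤ C := by
    intro m
    rw [BoundedContinuousFunction.norm_le hC]
    intro q
    have happ : (∑ k ∈ Finset.range m, v k) q = ∑ k ∈ Finset.range m, v k q := by simp
    rw [happ, Real.norm_eq_abs]
    by_cases hex : ∃ k ∈ Finset.range m, χ k q ≠ 0
    · obtain ⟨k₀, hk₀m, hk₀⟩ := hex
      have hsingle : ∑ k ∈ Finset.range m, v k q = v k₀ q := by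
        apply Finset.sum_eq_single_of_mem k₀ hk₀m
        intro j hjm hjne
        have hzero : χ j q = 0 := by
          by_contra hjq
          obtain ⟨hj1, hj2⟩ := χsupp j q hjq
          obtain ⟨hk1, hk2⟩ := χsupp k₀ q hk₀
          rcases lt_or_gt_of_ne hjne with hlt | hgt
          · -- j < k₀ : dd q < β k₀ / 2 ≤ β (j+1) / 2 < β (j+1), contradiction with hj1
            have := hβmono (j+1) k₀ hlt
            have hbj := hβpos (j+1)
            linarith
          · -- k₀ < j
            have := hβmono (k₀+1) j hgt
            have hbk := hβpos (k₀+1)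
            linarith
        rw [hvapp, hzero]
        ring
      rw [hsingle]
      exact vbound k₀ q
    · push_neg at hex
      have : ∑ k ∈ Finset.range m, v k q = 0 := by
        apply Finset.sum_eq_zero
        intro j hj
        rw [hvapp, hex j hj]
        ring
      rw [this]
      simpa using hC
  -- lower bound for Ψ of partial sums
  have lowS : ∀ m : ℕ, (m : ℝ) * (a / 2) ≤ Ψ (∑ k ∈ Finset.range m, v k) := by
    intro m
    rw [map_sum Ψ v (Finset.range m)]
    have hterm : ∀ k, a / 2 ≤ Ψ (v k) := by
      intro k
      have hw : ‖v k - sg k • u k‖ ≤ ε₀ := by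
        rw [BoundedContinuousFunction.norm_le (le_of_lt hε₀)]
        intro q
        have happ : (v k - sg k • u k) q = sg k * (u k q * χ k q) - sg k * u k q := by
          simp [hvapp]
        rw [happ, Real.norm_eq_abs]
        have heq : sg k * (u k q * χ k q) - sg k * u k q = sg k * u k q * (χ k q - 1) := by ring
        rw [heq, abs_mul, abs_mul, hsgabs k, one_mul]
        have hb1 := hβpos (k+1)
        have hb := hβpos k
        have h8 := (spec k).2.2.2.2
        rcases lt_or_ge (dd q) (4 * β (k+1)) with hlo | hmid
        · have h1 := (spec k).1 q hlo
          have h2 : |χ k q - 1| ≤ 1 := by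
            rw [abs_le]; constructor
            · have := χnonneg k q; linarith
            · have := χle1 k q; linarith
          nlinarith [abs_nonneg (u k q), abs_nonneg (χ k q - 1)]
        · rcases le_or_gt (dd q) (β k / 4) with hmid2 | hhi
          · have : χ k q = 1 := χone k q (by linarith) hmid2
            rw [this]
            simp [le_of_lt hε₀]
          · have h1 := (spec k).2.1 q (le_of_lt hhi)
            have h2 : |χ k q - 1| ≤ 1 := by
              rw [abs_le]; constructor
              · have := χnonneg k q; linarith
              · have := χle1 k q; linarith
            nlinarith [abs_nonneg (u k q), abs_nonneg (χ k q - 1)]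
      have hsplit : Ψ (v k) = sg k * Ψ (u k) + Ψ (v k - sg k • u k) := by
        rw [map_sub, map_smul]
        simp only [smul_eq_mul]
        ring
      have h1 : sg k * Ψ (u k) = |Ψ (u k)| := hsgmul k
      have h2 : a ≤ |Ψ (u k)| := (spec k).2.2.2.1
      have h3 : |Ψ (v k - sg k • u k)| ≤ ‖Ψ‖ * ε₀ := by
        calc |Ψ (v k - sg k • u k)| ≤ ‖Ψ‖ * ‖v k - sg k • u k‖ := by
              have := Ψ.le_opNorm (v k - sg k • u k)
              rwa [Real.norm_eq_abs] at this
          _ ≤ ‖Ψ‖ * ε₀ := mul_le_mul_of_nonneg_left hw (norm_nonneg Ψ)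
      have h4 : -(a/2) ≤ Ψ (v k - sg k • u k) := by
        have := neg_abs_le (Ψ (v k - sg k • u k))
        linarith
      rw [hsplit, h1]
      linarith
    calc (m : ℝ) * (a / 2) = ∑ _k ∈ Finset.range m, (a / 2) := by
          rw [Finset.sum_const, Finset.card_range]; ring
      _ ≤ ∑ k ∈ Finset.range m, Ψ (v k) := Finset.sum_le_sum (fun k _ => hterm k)
  -- contradiction
  have hfin : ∀ mm : ℕ, (mm : ℝ) * (a / 2) ≤ ‖Ψ‖ * C := by
    intro mm
    refine le_trans (lowS mm) ?_
    calc Ψ (∑ k ∈ Finset.range mm, v k) ≤ |Ψ (∑ k ∈ Finset.range mm, v k)| := le_abs_self _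
      _ ≤ ‖Ψ‖ * ‖∑ k ∈ Finset.range mm, v k‖ := by
          have := Ψ.le_opNorm (∑ k ∈ Finset.range mm, v k)
          rwa [Real.norm_eq_abs] at this
      _ ≤ ‖Ψ‖ * C := mul_le_mul_of_nonneg_left (normS mm) (norm_nonneg Ψ)
  have h3 := hfin (⌈(2 * ‖Ψ‖ * C) / a⌉₊ + 1)
  have hle := Nat.le_ceil ((2 * ‖Ψ‖ * C) / a)
  have hcast : ((⌈(2 * ‖Ψ‖ * C) / a⌉₊ + 1 : ℕ) : ℝ)
      = (⌈(2 * ‖Ψ‖ * C) / a⌉₊ : ℝ) + 1 := by push_cast; ring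
  rw [hcast] at h3
  have hq : (2 * ‖Ψ‖ * C) / a * (a / 2) = ‖Ψ‖ * C := by
    field_simp
  nlinarith [mul_le_mul_of_nonneg_right hle (le_of_lt (half_pos ha))]

/-- the master convergence lemma -/
lemma conv (Ψ : B →L[ℝ] ℝ) (u : ℕ → B) (C : ℝ)
    (hbd : ∀ n, ‖u n‖ ≤ C)
    (hlit : ∀ n, ∀ ε > (0:ℝ), ∃ α > (0:ℝ), ∀ q, dd q < α → |u n q| ≤ ε)
    (hcpt : ∀ β > (0:ℝ), ∀ ε > (0:ℝ), ∃ N, ∀ n ≥ N, ∀ q, β ≤ dd q → |u n q| ≤ ε) :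
    Filter.Tendsto (fun n => Ψ (u n)) Filter.atTop (nhds 0) := by
  by_contra hcon
  rw [Metric.tendsto_atTop] at hcon
  push_neg at hcon
  obtain ⟨a, ha, hA⟩ := hcon
  have hC0 : 0 ≤ C := le_trans (norm_nonneg _) (hbd 0)
  apply GH0 Ψ a C ha hC0
  intro β hβ ε' hε'
  obtain ⟨N, hN⟩ := hcpt β hβ ε' hε'
  obtain ⟨n, hn, hdist⟩ := hA N
  refine ⟨u n, hlit n ε' hε', hN n hn, hbd n, ?_⟩
  rwa [Real.dist_eq, sub_zero] at hdist

end MI3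

namespace MI4
open MI MI2 MI3 Filter Topology
variable {M : Type*} [MetricSpace M] [CompactSpace M] {p : M}
local notation "B" => BoundedContinuousFunction (OffDiag M) ℝ

/-- condition (B') -/
def CondB (p : M) : Prop :=
  ∀ F : M → ℝ, F p = 0 → (∀ s t : M, |F s - F t| ≤ dist s t) → ∀ ε > (0 : ℝ),
    ∃ f : M → ℝ, f p = 0 ∧ LittleLip f ∧ (∀ s t : M, |f s - f t| ≤ dist s t) ∧
      ∀ t : M, |f t - F t| ≤ ε

lemma approx (hB' : CondB p) (F : M → ℝ) (hFp : F p = 0) (C : ℝ) (hC : 0 < C)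
    (hF : ∀ s t, |F s - F t| ≤ C * dist s t) (ε : ℝ) (hε : 0 < ε) :
    ∃ g : M → ℝ, g p = 0 ∧ LittleLip g ∧ (∀ s t, |g s - g t| ≤ C * dist s t) ∧
      ∀ t, |g t - F t| ≤ ε := by
  obtain ⟨f, hf1, hf2, hf3, hf4⟩ := hB' (fun t => F t / C)
    (by show F p / C = 0; rw [hFp]; simp)
    (fun s t => by
      rw [div_sub_div_same, abs_div, abs_of_pos hC, div_le_iff₀ hC]
      calc |F s - F t| ≤ C * dist s t := hF s t
        _ = dist s t * C := by ring)
    (ε / C) (by positivity)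
  refine ⟨fun t => C * f t, by show C * f p = 0; rw [hf1]; ring,
    littleLip_smul C hf2, fun s t => ?_, fun t => ?_⟩
  · have := hf3 s t
    calc |C * f s - C * f t| = |C| * |f s - f t| := by
          rw [show C * f s - C * f t = C * (f s - f t) by ring, abs_mul]
      _ = C * |f s - f t| := by rw [abs_of_pos hC]
      _ ≤ C * dist s t := mul_le_mul_of_nonneg_left this (le_of_lt hC)
  · have := hf4 t
    calc |C * f t - F t| = |C| * |f t - F t / C| := by
          rw [show C * f t - F t = C * (f t - F t / C) by field_simp, abs_mul]
      _ = C * |f t - F t / C| := by rw [abs_of_pos hC]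
      _ ≤ C * (ε / C) := mul_le_mul_of_nonneg_left this (le_of_lt hC)
      _ = ε := by field_simp

/-- bound on coe from bound on rep differences -/
lemma abs_coe_le (e : ↥(deLeeuwSubmodule M p)) (q : OffDiag M) (c : ℝ)
    (hc : |rep e q.1.1 - rep e q.1.2| ≤ c * dist q.1.1 q.1.2) : |(e : B) q| ≤ c := by
  have hd : (0:ℝ) < dist q.1.1 q.1.2 := dd_pos q
  rw [rep_eq e q, abs_div, abs_of_pos hd, div_le_iff₀ hd]
  exact hc


lemma litbound (e : ↥(deLeeuwSubmodule M p)) (hl : LittleLip (rep e)) :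
    ∀ ε > (0:ℝ), ∃ α > (0:ℝ), ∀ q : OffDiag M, dd q < α → |(e : B) q| ≤ ε := by
  intro ε hε
  obtain ⟨δ, hδ, hd⟩ := hl ε hε
  exact ⟨δ, hδ, fun q hq => abs_coe_le e q ε (hd _ _ hq)⟩

noncomputable def gseq (hB' : CondB p) (h : ↥(deLeeuwSubmodule M p)) (n : ℕ) : M → ℝ :=
  (approx hB' (rep h) (rep_p h) (‖h‖ + 1/(n+1)) (by positivity)
    (fun s t => le_trans (rep_lip h s t)
      (mul_le_mul_of_nonneg_right (le_add_of_nonneg_right (by positivity)) dist_nonneg))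
    (1/(n+1)) (by positivity)).choose

lemma gseq_spec (hB' : CondB p) (h : ↥(deLeeuwSubmodule M p)) (n : ℕ) :
    (gseq hB' h n) p = 0 ∧ LittleLip (gseq hB' h n) ∧
    (∀ s t, |gseq hB' h n s - gseq hB' h n t| ≤ (‖h‖ + 1/(n+1)) * dist s t) ∧
    ∀ t, |gseq hB' h n t - rep h t| ≤ 1/(n+1) :=
  (approx hB' (rep h) (rep_p h) (‖h‖ + 1/(n+1)) (by positivity)
    (fun s t => le_trans (rep_lip h s t)
      (mul_le_mul_of_nonneg_right (le_add_of_nonneg_right (by positivity)) dist_nonneg))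
    (1/(n+1)) (by positivity)).choose_spec

noncomputable def hseqE (hB' : CondB p) (h : ↥(deLeeuwSubmodule M p)) (n : ℕ) :
    ↥(deLeeuwSubmodule M p) :=
  mkE p (gseq hB' h n) (gseq_spec hB' h n).1 (‖h‖ + 1/(n+1)) (gseq_spec hB' h n).2.2.1
    (by positivity)

lemma hseq_norm_le (hB' : CondB p) (h : ↥(deLeeuwSubmodule M p)) (n : ℕ) :
    ‖hseqE hB' h n‖ ≤ ‖h‖ + 1/(n+1) := norm_mkE_le _ _ _ _ _

lemma hseq_rep (hB' : CondB p) (h : ↥(deLeeuwSubmodule M p)) (n : ℕ) :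
    rep (hseqE hB' h n) = gseq hB' h n := rep_mkE _ _ _ _ _

lemma hseq_little (hB' : CondB p) (h : ↥(deLeeuwSubmodule M p)) (n : ℕ) :
    LittleLip (rep (hseqE hB' h n)) := by
  rw [hseq_rep]; exact (gseq_spec hB' h n).2.1

lemma hseq_close (hB' : CondB p) (h : ↥(deLeeuwSubmodule M p)) (n : ℕ) (β : ℝ) (hβ : 0 < β)
    (q : OffDiag M) (hq : β ≤ dd q) :
    |((h - hseqE hB' h n : ↥(deLeeuwSubmodule M p)) : B) q| ≤ 2/((n+1)*β) := by
  apply abs_coe_le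
  rw [rep_sub]
  have h1 := (gseq_spec hB' h n).2.2.2 q.1.1
  have h2 := (gseq_spec hB' h n).2.2.2 q.1.2
  rw [hseq_rep]
  have hd : (0:ℝ) < dist q.1.1 q.1.2 := dd_pos q
  have key : |(rep h q.1.1 - gseq hB' h n q.1.1) - (rep h q.1.2 - gseq hB' h n q.1.2)| ≤ 2/(n+1) := by
    calc |(rep h q.1.1 - gseq hB' h n q.1.1) - (rep h q.1.2 - gseq hB' h n q.1.2)|
        ≤ |rep h q.1.1 - gseq hB' h n q.1.1| + |rep h q.1.2 - gseq hB' h n q.1.2| := abs_sub _ _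
      _ ≤ 1/(n+1) + 1/(n+1) := by
          rw [abs_sub_comm (rep h q.1.1) _, abs_sub_comm (rep h q.1.2) _]
          exact add_le_add h1 h2
      _ = 2/(n+1) := by ring
  calc |rep h q.1.1 - gseq hB' h n q.1.1 - (rep h q.1.2 - gseq hB' h n q.1.2)| ≤ 2/(n+1) := key
    _ ≤ 2/((n+1)*β) * dist q.1.1 q.1.2 := by
        have hn1 : (0:ℝ) < (n:ℝ)+1 := by positivity
        rw [div_mul_eq_mul_div, le_div_iff₀ (by positivity)]
        have hc : 2/((n:ℝ)+1) * (((n:ℝ)+1)*β) = 2*β := by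
          field_simp
        rw [hc]
        have hdq : β ≤ dist q.1.1 q.1.2 := hq
        linarith

/-- the little subspace of B -/
def littleSub (p : M) : Submodule ℝ (BoundedContinuousFunction (OffDiag M) ℝ) where
  carrier := {h | ∃ f : M → ℝ, f p = 0 ∧ LittleLip f ∧
      (∃ K : ℝ, ∀ s t : M, |f s - f t| ≤ K * dist s t) ∧
      ∀ q : OffDiag M, h q = (f q.1.1 - f q.1.2) / dist q.1.1 q.1.2}
  zero_mem' := ⟨fun _ => 0, rfl, littleLip_zero, ⟨0, fun s t => by simp⟩, fun q => by simp⟩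
  add_mem' := by
    rintro h₁ h₂ ⟨F, hFp, hFl, ⟨K₁, hK₁⟩, hF⟩ ⟨G, hGp, hGl, ⟨K₂, hK₂⟩, hG⟩
    refine ⟨fun t => F t + G t, by simp [hFp, hGp], littleLip_add hFl hGl,
      ⟨K₁ + K₂, fun s t => ?_⟩, fun q => ?_⟩
    · calc |F s + G s - (F t + G t)| = |(F s - F t) + (G s - G t)| := by congr 1; ring
        _ ≤ |F s - F t| + |G s - G t| := abs_add_le _ _
        _ ≤ K₁ * dist s t + K₂ * dist s t := add_le_add (hK₁ s t) (hK₂ s t)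
        _ = (K₁ + K₂) * dist s t := by ring
    · rw [BoundedContinuousFunction.add_apply, hF q, hG q]; ring
  smul_mem' := by
    rintro c h ⟨F, hFp, hFl, ⟨K, hK⟩, hF⟩
    refine ⟨fun t => c * F t, by simp [hFp], littleLip_smul c hFl,
      ⟨|c| * K, fun s t => ?_⟩, fun q => ?_⟩
    · calc |c * F s - c * F t| = |c| * |F s - F t| := by rw [← abs_mul]; congr 1; ring
        _ ≤ |c| * (K * dist s t) := mul_le_mul_of_nonneg_left (hK s t) (abs_nonneg c)
        _ = |c| * K * dist s t := by ring
    · have : (c • h) q = c * h q := by rw [BoundedContinuousFunction.coe_smul]; simp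
      rw [this, hF q]; ring

lemma littleSub_le : littleSub p ≤ deLeeuwSubmodule M p := by
  rintro x ⟨f, hfp, _, hK, hf⟩
  exact ⟨f, hfp, hK, hf⟩

lemma mem_littleSub_of (e : ↥(deLeeuwSubmodule M p)) (hl : LittleLip (rep e)) :
    (e : B) ∈ littleSub p :=
  ⟨rep e, rep_p e, hl, (rep_spec e).2.1, rep_eq e⟩

set_option maxHeartbeats 1000000 in
/-- Hahn-Banach extension of the restriction of `φ` to the little subspace. -/
lemma exists_ext (φ : NDual ↥(deLeeuwSubmodule M p)) :
    ∃ Ψ : B →L[ℝ] ℝ, (∀ e : ↥(deLeeuwSubmodule M p), LittleLip (rep e) → Ψ (e : B) = φ e)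
      ∧ ‖Ψ‖ ≤ ‖φ‖ := by
  classical
  have hψlin : ∃ ψl : ↥(littleSub p) →ₗ[ℝ] ℝ, ∀ x : ↥(littleSub p),
      ψl x = φ ⟨x.1, littleSub_le x.2⟩ := by
    refine ⟨⟨⟨fun x => φ ⟨x.1, littleSub_le x.2⟩, ?_⟩, ?_⟩, fun x => rfl⟩
    · intro x y
      rw [← map_add]
      exact congrArg φ (Subtype.ext rfl)
    · intro c x
      simp only [RingHom.id_apply]
      rw [← map_smul]
      exact congrArg φ (Subtype.ext rfl)
  obtain ⟨ψl, hψl⟩ := hψlin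
  have hbound : ∀ x : ↥(littleSub p), ‖ψl x‖ ≤ ‖φ‖ * ‖x‖ := by
    intro x
    rw [hψl]
    have h1 := φ.le_opNorm ⟨x.1, littleSub_le x.2⟩
    have h2 : ‖(⟨x.1, littleSub_le x.2⟩ : ↥(deLeeuwSubmodule M p))‖ = ‖x‖ := rfl
    rwa [h2] at h1
  obtain ⟨Ψ, hΨ1, hΨ2⟩ := exists_extension_norm_eq (littleSub p)
    (LinearMap.mkContinuous ψl ‖φ‖ hbound)
  refine ⟨Ψ, ?_, ?_⟩
  · intro e hl
    have hmem : (e : B) ∈ littleSub p := mem_littleSub_of e hl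
    have h1 := hΨ1 (⟨(e : B), hmem⟩ : ↥(littleSub p))
    have h2 : (LinearMap.mkContinuous ψl ‖φ‖ hbound) (⟨(e : B), hmem⟩ : ↥(littleSub p))
        = φ ⟨(e : B), littleSub_le hmem⟩ := hψl _
    have h3 : (⟨(e : B), littleSub_le hmem⟩ : ↥(deLeeuwSubmodule M p)) = e := Subtype.ext rfl
    rw [h1, h2, h3]
  · rw [hΨ2]
    exact LinearMap.mkContinuous_norm_le _ (norm_nonneg φ) _

end MI4

namespace MI5
open MI MI2 MI3 MI4 Filter Topology
variable {M : Type*} [MetricSpace M] [CompactSpace M] {p : M}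
local notation "B" => BoundedContinuousFunction (OffDiag M) ℝ

lemma coe_sub_apply (x y : ↥(deLeeuwSubmodule M p)) (q : OffDiag M) :
    ((x - y : ↥(deLeeuwSubmodule M p)) : B) q = (x : B) q - (y : B) q := rfl
lemma coe_add_apply (x y : ↥(deLeeuwSubmodule M p)) (q : OffDiag M) :
    ((x + y : ↥(deLeeuwSubmodule M p)) : B) q = (x : B) q + (y : B) q := rfl
lemma coe_smul_apply (c : ℝ) (x : ↥(deLeeuwSubmodule M p)) (q : OffDiag M) :
    ((c • x : ↥(deLeeuwSubmodule M p)) : B) q = c * ((x : B) q) := rfl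

lemma one_div_nat_le_one (n : ℕ) : 1/((n:ℝ)+1) ≤ 1 := by
  rw [div_le_one (by positivity)]
  have : (0:ℝ) ≤ (n:ℝ) := Nat.cast_nonneg n
  linarith

lemma nat_div_le (c ε : ℝ) (hc : 0 ≤ c) (hε : 0 < ε) :
    ∃ N : ℕ, ∀ n : ℕ, n ≥ N → c / ((n:ℝ)+1) ≤ ε := by
  refine ⟨⌈c/ε⌉₊, fun n hn => ?_⟩
  have h1 : (⌈c/ε⌉₊ : ℝ) ≤ n := Nat.cast_le.2 hn
  have h2 : c/ε ≤ (n:ℝ) := le_trans (Nat.le_ceil _) h1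
  rw [div_le_iff₀ (by positivity : (0:ℝ) < (n:ℝ)+1)]
  rw [div_le_iff₀ hε] at h2
  nlinarith

lemma div_mono_denom (c : ℝ) (hc : 0 ≤ c) (x y : ℝ) (hx : 0 < x) (hxy : x ≤ y) :
    c / y ≤ c / x := by gcongr

lemma key_cauchy (hB' : CondB p) (φ : NDual ↥(deLeeuwSubmodule M p))
    (h : ↥(deLeeuwSubmodule M p)) :
    ∃ l, Tendsto (fun n => φ (hseqE hB' h n)) atTop (𝓝 l) := by
  obtain ⟨Ψ, hΨe, hΨn⟩ := exists_ext φ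
  have heq : ∀ n : ℕ, φ (hseqE hB' h n) = Ψ ((hseqE hB' h n : ↥(deLeeuwSubmodule M p)) : B) :=
    fun n => (hΨe _ (hseq_little hB' h n)).symm
  suffices hc : CauchySeq (fun n => Ψ ((hseqE hB' h n : ↥(deLeeuwSubmodule M p)) : B)) by
    obtain ⟨l, hl⟩ := cauchySeq_tendsto_of_complete hc
    refine ⟨l, ?_⟩
    rw [show (fun n => φ (hseqE hB' h n))
        = (fun n => Ψ ((hseqE hB' h n : ↥(deLeeuwSubmodule M p)) : B)) from funext heq]
    exact hl
  rw [Metric.cauchySeq_iff]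
  by_contra hcon
  push_neg at hcon
  obtain ⟨a, ha, hA⟩ := hcon
  choose mf hmf nf hnf hdist using hA
  set u : ℕ → B :=
    fun j => ((hseqE hB' h (mf j) - hseqE hB' h (nf j) : ↥(deLeeuwSubmodule M p)) : B) with hudef
  have hlitz : ∀ j, LittleLip (rep (hseqE hB' h (mf j) - hseqE hB' h (nf j))) := by
    intro j
    rw [rep_sub]
    exact littleLip_sub (hseq_little hB' h (mf j)) (hseq_little hB' h (nf j))
  have htend : Tendsto (fun j => Ψ (u j)) atTop (𝓝 0) := by
    apply conv Ψ u (2*‖h‖+2)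
    · intro j
      have e1 : ‖u j‖ = ‖hseqE hB' h (mf j) - hseqE hB' h (nf j)‖ := rfl
      rw [e1]
      calc ‖hseqE hB' h (mf j) - hseqE hB' h (nf j)‖
          ≤ ‖hseqE hB' h (mf j)‖ + ‖hseqE hB' h (nf j)‖ := by
            exact norm_sub_le (hseqE hB' h (mf j)) (hseqE hB' h (nf j))
        _ ≤ (‖h‖ + 1/(mf j+1)) + (‖h‖ + 1/(nf j+1)) :=
            add_le_add (hseq_norm_le hB' h (mf j)) (hseq_norm_le hB' h (nf j))
        _ ≤ 2*‖h‖+2 := by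
            have b1 := one_div_nat_le_one (mf j)
            have b2 := one_div_nat_le_one (nf j)
            linarith
    · intro j ε hε
      exact litbound _ (hlitz j) ε hε
    · intro β hβ ε hε
      obtain ⟨N, hN⟩ := nat_div_le (4/β) ε (by positivity) hε
      refine ⟨N, fun j hj q hq => ?_⟩
      have c1 := hseq_close hB' h (mf j) β hβ q hq
      have c2 := hseq_close hB' h (nf j) β hβ q hq
      have hmj : (j:ℝ) ≤ mf j := Nat.cast_le.2 (hmf j)
      have hnj : (j:ℝ) ≤ nf j := Nat.cast_le.2 (hnf j)
      calc |u j q| ≤ 2/(((nf j:ℝ)+1)*β) + 2/(((mf j:ℝ)+1)*β) := by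
            have e1 : u j q = ((h - hseqE hB' h (nf j) : ↥(deLeeuwSubmodule M p)) : B) q
                - ((h - hseqE hB' h (mf j) : ↥(deLeeuwSubmodule M p)) : B) q := by
              rw [hudef]
              simp only [coe_sub_apply]
              ring
            rw [e1]
            exact le_trans (abs_sub _ _) (add_le_add c2 c1)
        _ ≤ 2/(((j:ℝ)+1)*β) + 2/(((j:ℝ)+1)*β) := by
            apply add_le_add
            · apply div_mono_denom 2 (by norm_num) _ _ (by positivity)
              apply mul_le_mul_of_nonneg_right (by linarith) (le_of_lt hβ)
            · apply div_mono_denom 2 (by norm_num) _ _ (by positivity)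
              apply mul_le_mul_of_nonneg_right (by linarith) (le_of_lt hβ)
        _ = (4/β)/((j:ℝ)+1) := by
            field_simp
            ring
        _ ≤ ε := hN j hj
  rw [Metric.tendsto_atTop] at htend
  obtain ⟨N, hN2⟩ := htend a ha
  have h1 := hN2 N (le_refl N)
  rw [Real.dist_eq, sub_zero] at h1
  have h2 := hdist N
  rw [Real.dist_eq] at h2
  have e2 : Ψ ((hseqE hB' h (mf N) : ↥(deLeeuwSubmodule M p)) : B)
      - Ψ ((hseqE hB' h (nf N) : ↥(deLeeuwSubmodule M p)) : B) = Ψ (u N) := by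
    rw [hudef]
    simp only
    rw [show ((hseqE hB' h (mf N) - hseqE hB' h (nf N) : ↥(deLeeuwSubmodule M p)) : B)
        = ((hseqE hB' h (mf N) : ↥(deLeeuwSubmodule M p)) : B)
          - ((hseqE hB' h (nf N) : ↥(deLeeuwSubmodule M p)) : B) from rfl, map_sub]
  rw [e2] at h2
  linarith

noncomputable def Pfun (hB' : CondB p) (φ : NDual ↥(deLeeuwSubmodule M p))
    (h : ↥(deLeeuwSubmodule M p)) : ℝ := (key_cauchy hB' φ h).choose

lemma Pfun_tendsto (hB' : CondB p) (φ : NDual ↥(deLeeuwSubmodule M p))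
    (h : ↥(deLeeuwSubmodule M p)) :
    Tendsto (fun n => φ (hseqE hB' h n)) atTop (𝓝 (Pfun hB' φ h)) :=
  (key_cauchy hB' φ h).choose_spec

/-- the master approximation lemma -/
lemma tendsto_of_approx (hB' : CondB p) (φ : NDual ↥(deLeeuwSubmodule M p))
    (h : ↥(deLeeuwSubmodule M p)) (e : ℕ → ↥(deLeeuwSubmodule M p)) (C : ℝ)
    (hlit : ∀ m, LittleLip (rep (e m))) (hbd : ∀ m, ‖e m‖ ≤ C)
    (hcv : ∀ β > (0:ℝ), ∀ ε > (0:ℝ), ∃ N, ∀ m ≥ N, ∀ q : OffDiag M, β ≤ dd q →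
        |((e m - h : ↥(deLeeuwSubmodule M p)) : B) q| ≤ ε) :
    Tendsto (fun m => φ (e m)) atTop (𝓝 (Pfun hB' φ h)) := by
  obtain ⟨Ψ, hΨe, hΨn⟩ := exists_ext φ
  have hz : ∀ m, LittleLip (rep (e m - hseqE hB' h m)) := by
    intro m
    rw [rep_sub]
    exact littleLip_sub (hlit m) (hseq_little hB' h m)
  have key : ∀ m, φ (e m) = φ (hseqE hB' h m)
      + Ψ (((e m - hseqE hB' h m : ↥(deLeeuwSubmodule M p))) : B) := by
    intro m
    rw [hΨe _ (hz m), map_sub φ]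
    ring
  have h2 : Tendsto (fun m => Ψ (((e m - hseqE hB' h m : ↥(deLeeuwSubmodule M p))) : B))
      atTop (𝓝 0) := by
    apply conv Ψ _ (C + ‖h‖ + 1)
    · intro m
      have e1 : ‖((e m - hseqE hB' h m : ↥(deLeeuwSubmodule M p)) : B)‖
          = ‖e m - hseqE hB' h m‖ := rfl
      rw [e1]
      calc ‖e m - hseqE hB' h m‖ ≤ ‖e m‖ + ‖hseqE hB' h m‖ := by
            exact norm_sub_le (e m) (hseqE hB' h m)
        _ ≤ C + (‖h‖ + 1/(m+1)) := add_le_add (hbd m) (hseq_norm_le hB' h m)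
        _ ≤ C + ‖h‖ + 1 := by
            have := one_div_nat_le_one m
            linarith
    · intro m ε hε
      exact litbound _ (hz m) ε hε
    · intro β hβ ε hε
      obtain ⟨N₁, hN₁⟩ := hcv β hβ (ε/2) (by linarith)
      obtain ⟨N₂, hN₂⟩ := nat_div_le (2/β) (ε/2) (by positivity) (by linarith)
      refine ⟨max N₁ N₂, fun m hm q hq => ?_⟩
      have hm1 : m ≥ N₁ := le_trans (le_max_left _ _) hm
      have hm2 : m ≥ N₂ := le_trans (le_max_right _ _) hm
      have e1 : ((e m - hseqE hB' h m : ↥(deLeeuwSubmodule M p)) : B) q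
          = ((e m - h : ↥(deLeeuwSubmodule M p)) : B) q
            + ((h - hseqE hB' h m : ↥(deLeeuwSubmodule M p)) : B) q := by
        simp only [coe_sub_apply]
        ring
      rw [e1]
      have c1 := hN₁ m hm1 q hq
      have c2 := hseq_close hB' h m β hβ q hq
      have c3 : 2/(((m:ℝ)+1)*β) ≤ ε/2 := by
        have := hN₂ m hm2
        calc 2/(((m:ℝ)+1)*β) = (2/β)/((m:ℝ)+1) := by
              field_simp
          _ ≤ ε/2 := this
      calc |((e m - h : ↥(deLeeuwSubmodule M p)) : B) q
          + ((h - hseqE hB' h m : ↥(deLeeuwSubmodule M p)) : B) q|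
          ≤ |((e m - h : ↥(deLeeuwSubmodule M p)) : B) q|
            + |((h - hseqE hB' h m : ↥(deLeeuwSubmodule M p)) : B) q| := abs_add_le _ _
        _ ≤ ε/2 + 2/(((m:ℝ)+1)*β) := add_le_add c1 c2
        _ ≤ ε := by linarith
  have h1 := Pfun_tendsto hB' φ h
  have h3 := h1.add h2
  rw [add_zero] at h3
  apply h3.congr
  intro m
  exact (key m).symm

lemma Pfun_little (hB' : CondB p) (φ : NDual ↥(deLeeuwSubmodule M p))
    (e : ↥(deLeeuwSubmodule M p)) (hl : LittleLip (rep e)) : Pfun hB' φ e = φ e := by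
  have t1 := tendsto_of_approx hB' φ e (fun _ => e) ‖e‖ (fun _ => hl) (fun _ => le_rfl)
    (by
      intro β hβ ε hε
      refine ⟨0, fun m _ q _ => ?_⟩
      show |((e - e : ↥(deLeeuwSubmodule M p)) : B) q| ≤ ε
      have h00 : ((e - e : ↥(deLeeuwSubmodule M p)) : B) q = 0 := by
        rw [coe_sub_apply]
        ring
      rw [h00]
      simp [le_of_lt hε])
  exact tendsto_nhds_unique t1 tendsto_const_nhds

end MI5

namespace MI6
open MI MI2 MI3 MI4 MI5 Filter Topology
variable {M : Type*} [MetricSpace M] [CompactSpace M] {p : M}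
local notation "B" => BoundedContinuousFunction (OffDiag M) ℝ

lemma Pfun_add (hB' : CondB p) (φ : NDual ↥(deLeeuwSubmodule M p))
    (h₁ h₂ : ↥(deLeeuwSubmodule M p)) :
    Pfun hB' φ (h₁ + h₂) = Pfun hB' φ h₁ + Pfun hB' φ h₂ := by
  have t1 := (Pfun_tendsto hB' φ h₁).add (Pfun_tendsto hB' φ h₂)
  have t2 : Tendsto (fun n => φ (hseqE hB' h₁ n + hseqE hB' h₂ n)) atTop
      (𝓝 (Pfun hB' φ h₁ + Pfun hB' φ h₂)) := by
    apply t1.congr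
    intro n
    rw [map_add]
  have t3 := tendsto_of_approx hB' φ (h₁+h₂) (fun n => hseqE hB' h₁ n + hseqE hB' h₂ n)
    (‖h₁‖+‖h₂‖+2)
    (fun m => by
      rw [rep_add]
      exact littleLip_add (hseq_little hB' h₁ m) (hseq_little hB' h₂ m))
    (fun m => by
      calc ‖hseqE hB' h₁ m + hseqE hB' h₂ m‖ ≤ ‖hseqE hB' h₁ m‖ + ‖hseqE hB' h₂ m‖ := by
            exact norm_add_le (hseqE hB' h₁ m) (hseqE hB' h₂ m)
        _ ≤ (‖h₁‖ + 1/(m+1)) + (‖h₂‖ + 1/(m+1)) :=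
            add_le_add (hseq_norm_le hB' h₁ m) (hseq_norm_le hB' h₂ m)
        _ ≤ ‖h₁‖+‖h₂‖+2 := by
            have := one_div_nat_le_one m
            linarith)
    (by
      intro β hβ ε hε
      obtain ⟨N, hN⟩ := nat_div_le (4/β) ε (by positivity) hε
      refine ⟨N, fun m hm q hq => ?_⟩
      have c1 := hseq_close hB' h₁ m β hβ q hq
      have c2 := hseq_close hB' h₂ m β hβ q hq
      have e1 : ((hseqE hB' h₁ m + hseqE hB' h₂ m - (h₁ + h₂) :
          ↥(deLeeuwSubmodule M p)) : B) q
          = -(((h₁ - hseqE hB' h₁ m : ↥(deLeeuwSubmodule M p)) : B) q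
            + ((h₂ - hseqE hB' h₂ m : ↥(deLeeuwSubmodule M p)) : B) q) := by
        simp only [coe_sub_apply, coe_add_apply]
        ring
      rw [e1, abs_neg]
      calc |((h₁ - hseqE hB' h₁ m : ↥(deLeeuwSubmodule M p)) : B) q
          + ((h₂ - hseqE hB' h₂ m : ↥(deLeeuwSubmodule M p)) : B) q|
          ≤ |((h₁ - hseqE hB' h₁ m : ↥(deLeeuwSubmodule M p)) : B) q|
            + |((h₂ - hseqE hB' h₂ m : ↥(deLeeuwSubmodule M p)) : B) q| := abs_add_le _ _
        _ ≤ 2/(((m:ℝ)+1)*β) + 2/(((m:ℝ)+1)*β) := add_le_add c1 c2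
        _ = (4/β)/((m:ℝ)+1) := by field_simp; ring
        _ ≤ ε := hN m hm)
  exact tendsto_nhds_unique t3 t2

lemma Pfun_smul (hB' : CondB p) (φ : NDual ↥(deLeeuwSubmodule M p))
    (c : ℝ) (h : ↥(deLeeuwSubmodule M p)) :
    Pfun hB' φ (c • h) = c * Pfun hB' φ h := by
  have t1 : Tendsto (fun n => c * φ (hseqE hB' h n)) atTop (𝓝 (c * Pfun hB' φ h)) :=
    (Pfun_tendsto hB' φ h).const_mul c
  have t2 : Tendsto (fun n => φ (c • hseqE hB' h n)) atTop (𝓝 (c * Pfun hB' φ h)) := by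
    apply t1.congr
    intro n
    rw [map_smul, smul_eq_mul]
  have t3 := tendsto_of_approx hB' φ (c • h) (fun n => c • hseqE hB' h n) (|c| * (‖h‖+1))
    (fun m => by
      rw [rep_smul]
      exact littleLip_smul c (hseq_little hB' h m))
    (fun m => by
      rw [coe_norm (c • hseqE hB' h m), BoundedContinuousFunction.norm_le (by positivity)]
      intro q
      rw [coe_smul_apply, Real.norm_eq_abs, abs_mul]
      have b1 : |((hseqE hB' h m : ↥(deLeeuwSubmodule M p)) : B) q| ≤ ‖hseqE hB' h m‖ := by
        have := ((hseqE hB' h m : ↥(deLeeuwSubmodule M p)) : B).norm_coe_le_norm q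
        rwa [Real.norm_eq_abs] at this
      have b2 : ‖hseqE hB' h m‖ ≤ ‖h‖ + 1 := by
        have := hseq_norm_le hB' h m
        have := one_div_nat_le_one m
        linarith
      have := abs_nonneg c
      nlinarith [abs_nonneg (((hseqE hB' h m : ↥(deLeeuwSubmodule M p)) : B) q)])
    (by
      intro β hβ ε hε
      obtain ⟨N, hN⟩ := nat_div_le ((2 * |c|)/β) ε (by positivity) hε
      refine ⟨N, fun m hm q hq => ?_⟩
      have c1 := hseq_close hB' h m β hβ q hq
      have e1 : ((c • hseqE hB' h m - c • h : ↥(deLeeuwSubmodule M p)) : B) q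
          = -(c * ((h - hseqE hB' h m : ↥(deLeeuwSubmodule M p)) : B) q) := by
        simp only [coe_sub_apply, coe_smul_apply]
        ring
      have e2 : (c • hseqE hB' h m - c • h : ↥(deLeeuwSubmodule M p))
          = (c • hseqE hB' h m - (c • h) : ↥(deLeeuwSubmodule M p)) := rfl
      rw [e1, abs_neg, abs_mul]
      calc |c| * |((h - hseqE hB' h m : ↥(deLeeuwSubmodule M p)) : B) q|
          ≤ |c| * (2/(((m:ℝ)+1)*β)) := mul_le_mul_of_nonneg_left c1 (abs_nonneg c)
        _ = ((2 * |c|)/β)/((m:ℝ)+1) := by field_simp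
        _ ≤ ε := hN m hm)
  exact tendsto_nhds_unique t3 t2

lemma Pfun_norm_le (hB' : CondB p) (φ : NDual ↥(deLeeuwSubmodule M p))
    (h : ↥(deLeeuwSubmodule M p)) : |Pfun hB' φ h| ≤ ‖φ‖ * ‖h‖ := by
  have habs : Tendsto (fun n => |φ (hseqE hB' h n)|) atTop (𝓝 |Pfun hB' φ h|) :=
    (Pfun_tendsto hB' φ h).abs
  have hrhs : Tendsto (fun n : ℕ => ‖φ‖ * (‖h‖ + 1/((n:ℝ)+1))) atTop (𝓝 (‖φ‖ * ‖h‖)) := by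
    have h1 : Tendsto (fun n : ℕ => 1/((n:ℝ)+1)) atTop (𝓝 0) := tendsto_one_div_add_atTop_nhds_zero_nat
    have h2 : Tendsto (fun n : ℕ => ‖h‖ + 1/((n:ℝ)+1)) atTop (𝓝 (‖h‖ + 0)) :=
      tendsto_const_nhds.add h1
    rw [add_zero] at h2
    exact h2.const_mul ‖φ‖
  apply le_of_tendsto_of_tendsto' habs hrhs
  intro n
  calc |φ (hseqE hB' h n)| ≤ ‖φ‖ * ‖hseqE hB' h n‖ := by
        have := φ.le_opNorm (hseqE hB' h n)
        rwa [Real.norm_eq_abs] at this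
    _ ≤ ‖φ‖ * (‖h‖ + 1/(n+1)) :=
        mul_le_mul_of_nonneg_left (hseq_norm_le hB' h n) (norm_nonneg φ)

lemma Pfun_phi_add (hB' : CondB p) (φ₁ φ₂ : NDual ↥(deLeeuwSubmodule M p))
    (h : ↥(deLeeuwSubmodule M p)) :
    Pfun hB' (φ₁ + φ₂) h = Pfun hB' φ₁ h + Pfun hB' φ₂ h := by
  have t1 := (Pfun_tendsto hB' φ₁ h).add (Pfun_tendsto hB' φ₂ h)
  have t2 := Pfun_tendsto hB' (φ₁ + φ₂) h
  refine tendsto_nhds_unique t2 (t1.congr (fun n => ?_))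
  rw [ContinuousLinearMap.add_apply]

lemma Pfun_phi_smul (hB' : CondB p) (c : ℝ) (φ : NDual ↥(deLeeuwSubmodule M p))
    (h : ↥(deLeeuwSubmodule M p)) :
    Pfun hB' (c • φ) h = c * Pfun hB' φ h := by
  have t1 := (Pfun_tendsto hB' φ h).const_mul c
  have t2 := Pfun_tendsto hB' (c • φ) h
  refine tendsto_nhds_unique t2 (t1.congr (fun n => ?_))
  rw [ContinuousLinearMap.smul_apply, smul_eq_mul]

noncomputable def Pmap (hB' : CondB p) (φ : NDual ↥(deLeeuwSubmodule M p)) :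
    NDual ↥(deLeeuwSubmodule M p) :=
  LinearMap.mkContinuous
    { toFun := Pfun hB' φ,
      map_add' := Pfun_add hB' φ,
      map_smul' := fun c h => by
        simp only [RingHom.id_apply, smul_eq_mul]
        exact Pfun_smul hB' φ c h }
    ‖φ‖ (fun h => by
      rw [Real.norm_eq_abs]
      exact Pfun_norm_le hB' φ h)

lemma Pmap_apply (hB' : CondB p) (φ : NDual ↥(deLeeuwSubmodule M p))
    (h : ↥(deLeeuwSubmodule M p)) : Pmap hB' φ h = Pfun hB' φ h := rfl

lemma Pmap_norm_le (hB' : CondB p) (φ : NDual ↥(deLeeuwSubmodule M p)) :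
    ‖Pmap hB' φ‖ ≤ ‖φ‖ :=
  LinearMap.mkContinuous_norm_le _ (norm_nonneg φ) _

noncomputable def PP (hB' : CondB p) :
    NDual ↥(deLeeuwSubmodule M p) →L[ℝ] NDual ↥(deLeeuwSubmodule M p) :=
  LinearMap.mkContinuous
    { toFun := Pmap hB',
      map_add' := fun φ₁ φ₂ => ContinuousLinearMap.ext (fun h => by
        rw [ContinuousLinearMap.add_apply, Pmap_apply, Pmap_apply, Pmap_apply]
        exact Pfun_phi_add hB' φ₁ φ₂ h),
      map_smul' := fun c φ => ContinuousLinearMap.ext (fun h => by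
        simp only [RingHom.id_apply]
        rw [ContinuousLinearMap.smul_apply, Pmap_apply, Pmap_apply, smul_eq_mul]
        exact Pfun_phi_smul hB' c φ h) }
    1 (fun φ => by
      rw [one_mul]
      exact Pmap_norm_le hB' φ)

lemma PP_apply (hB' : CondB p) (φ : NDual ↥(deLeeuwSubmodule M p)) :
    PP hB' φ = Pmap hB' φ := rfl

lemma P_idem (hB' : CondB p) (φ : NDual ↥(deLeeuwSubmodule M p)) :
    Pmap hB' (Pmap hB' φ) = Pmap hB' φ := by
  apply ContinuousLinearMap.ext
  intro h
  have t1 := Pfun_tendsto hB' (Pmap hB' φ) h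
  have t2 := Pfun_tendsto hB' φ h
  have he : ∀ n, (Pmap hB' φ) (hseqE hB' h n) = φ (hseqE hB' h n) := fun n => by
    rw [Pmap_apply, Pfun_little hB' φ _ (hseq_little hB' h n)]
  rw [Pmap_apply, Pmap_apply]
  exact tendsto_nhds_unique t1 (t2.congr (fun n => (he n).symm))

lemma P_zero_iff (hB' : CondB p) (φ : NDual ↥(deLeeuwSubmodule M p)) :
    Pmap hB' φ = 0 ↔ ∀ y : ↥(deLeeuwSubmodule M p), LittleLip (rep y) → φ y = 0 := by
  constructor
  · intro h0 y hy
    have : Pmap hB' φ y = 0 := by rw [h0]; rfl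
    rwa [Pmap_apply, Pfun_little hB' φ y hy] at this
  · intro hvan
    apply ContinuousLinearMap.ext
    intro h
    rw [Pmap_apply]
    have t1 := Pfun_tendsto hB' φ h
    have he : ∀ n, φ (hseqE hB' h n) = 0 := fun n => hvan _ (hseq_little hB' h n)
    have t2 : Tendsto (fun n => φ (hseqE hB' h n)) atTop (𝓝 0) := by
      rw [show (fun n => φ (hseqE hB' h n)) = (fun _ => (0:ℝ)) from funext he]
      exact tendsto_const_nhds
    have := tendsto_nhds_unique t1 t2
    rw [this]
    rfl

end MI6

namespace MI7
open MI MI2 MI3 MI4 MI5 MI6 Filter Topology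
variable {M : Type*} [MetricSpace M] [CompactSpace M] {p : M}
local notation "B" => BoundedContinuousFunction (OffDiag M) ℝ

lemma smul_norm_le (c : ℝ) (x : ↥(deLeeuwSubmodule M p)) : ‖c • x‖ ≤ |c| * ‖x‖ := by
  rw [coe_norm (c • x), BoundedContinuousFunction.norm_le (by positivity)]
  intro q
  rw [coe_smul_apply, Real.norm_eq_abs, abs_mul]
  have b1 : |(x : B) q| ≤ ‖x‖ := by
    have := (x : B).norm_coe_le_norm q
    rwa [Real.norm_eq_abs, ← coe_norm x] at this
  nlinarith [abs_nonneg c, abs_nonneg ((x : B) q)]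

lemma norm_smulE (c : ℝ) (x : ↥(deLeeuwSubmodule M p)) : ‖c • x‖ = |c| * ‖x‖ := by
  rcases eq_or_ne c 0 with rfl | hc
  · rw [zero_smul]
    simp
  · apply le_antisymm (smul_norm_le c x)
    have h1 := smul_norm_le c⁻¹ (c • x)
    rw [smul_smul, inv_mul_cancel₀ hc, one_smul, abs_inv] at h1
    have hc' : 0 < |c| := abs_pos.2 hc
    have h2 : |c| * (|c|⁻¹ * ‖c • x‖) = ‖c • x‖ := by field_simp
    nlinarith [h1, hc']

lemma norm_negE (x : ↥(deLeeuwSubmodule M p)) : ‖-x‖ = ‖x‖ := by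
  have h0 : -x = (-1 : ℝ) • x := (neg_one_smul ℝ x).symm
  rw [h0, norm_smulE]
  simp

lemma exists_near (T : NDual ↥(deLeeuwSubmodule M p)) (η : ℝ) (hη : 0 < η) :
    ∃ h : ↥(deLeeuwSubmodule M p), ‖h‖ ≤ 1 ∧ ‖T‖ - η ≤ T h := by
  rcases le_or_gt ‖T‖ η with hle | hlt
  · refine ⟨0, by simp, ?_⟩
    rw [map_zero]
    linarith
  · by_contra hcon
    push_neg at hcon
    have hb : ∀ h : ↥(deLeeuwSubmodule M p), ‖h‖ ≤ 1 → |T h| ≤ ‖T‖ - η := by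
      intro h hh
      have h1 := hcon h hh
      have h2 := hcon (-h) (by rw [norm_negE]; exact hh)
      have h2b : T (-h) = -(T h) := map_neg T h
      rw [h2b] at h2
      rw [abs_le]
      constructor <;> linarith
    have : ‖T‖ ≤ ‖T‖ - η := by
      apply ContinuousLinearMap.opNorm_le_bound T (by linarith)
      intro x
      rcases eq_or_ne x 0 with rfl | hx
      · simp
      · have hxn : 0 < ‖x‖ := by
          rcases lt_or_eq_of_le (norm_nonneg x) with hl | he
          · exact hl
          · exfalso
            apply hx
            have hb0 : ‖(x : B)‖ = 0 := by rw [← coe_norm, ← he]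
            have hxb : (x : B) = 0 := norm_eq_zero.mp hb0
            exact Subtype.ext hxb
        have hun : ‖(‖x‖)⁻¹ • x‖ ≤ 1 := by
          rw [norm_smulE, abs_inv, abs_of_pos hxn, inv_mul_cancel₀ (ne_of_gt hxn)]
        have hTu := hb ((‖x‖)⁻¹ • x) hun
        have hTu2 : T ((‖x‖)⁻¹ • x) = (‖x‖)⁻¹ * T x := by
          rw [map_smul, smul_eq_mul]
        rw [hTu2, abs_mul, abs_inv, abs_of_pos hxn] at hTu
        rw [Real.norm_eq_abs]
        calc |T x| = ‖x‖ * ((‖x‖)⁻¹ * |T x|) := by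
              rw [← mul_assoc, mul_inv_cancel₀ (ne_of_gt hxn), one_mul]
          _ ≤ ‖x‖ * (‖T‖ - η) := mul_le_mul_of_nonneg_left hTu (norm_nonneg x)
          _ = (‖T‖ - η) * ‖x‖ := by ring
    linarith

lemma claimF (hB' : CondB p) (φ : NDual ↥(deLeeuwSubmodule M p))
    (η : ℝ) (hη : 0 < η) :
    ∃ δ : ℝ, 0 < δ ∧ ∃ ε' : ℝ, 0 < ε' ∧ ∀ e : ↥(deLeeuwSubmodule M p),
      LittleLip (rep e) → ‖e‖ ≤ 3 →
      (∀ q : OffDiag M, δ ≤ dd q → |(e : B) q| ≤ ε') → |φ e| ≤ η := by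
  obtain ⟨Ψ, hΨe, hΨn⟩ := exists_ext φ
  by_contra hcon
  push_neg at hcon
  apply GH0 Ψ η 3 hη (by norm_num)
  intro β hβ ε' hε'
  obtain ⟨e, he1, he2, he3, he4⟩ := hcon β hβ ε' hε'
  refine ⟨(e : B), litbound e he1 ε' hε', he3, by rw [← coe_norm]; exact he2, ?_⟩
  rw [hΨe e he1]
  exact le_of_lt he4

lemma chain (hB' : CondB p) (G : M → ℝ) (hGp : G p = 0)
    (hG : ∀ s t, |G s - G t| ≤ dist s t)
    (ρ : ℝ) (hρ : 0 < ρ) (δ₀ : ℝ) (hδ₀ : 0 < δ₀) :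
    ∃ (g : ℕ → M → ℝ) (Δ : ℕ → ℝ), Δ 0 ≤ δ₀ ∧ (∀ i, 0 < Δ i) ∧ (∀ i, Δ (i+1) ≤ Δ i) ∧
      (∀ i, g i p = 0) ∧ (∀ i, LittleLip (g i)) ∧
      (∀ i s t, |g i s - g i t| ≤ dist s t) ∧
      (∀ i s t, Δ i ≤ dist s t → |(G s - G t) - (g i s - g i t)| ≤ ρ * dist s t) ∧
      (∀ i s t, dist s t < Δ (i+1) → |g i s - g i t| ≤ ρ * dist s t) := by
  classical
  have key : ∀ d : {d : ℝ // 0 < d}, ∃ w : (M → ℝ) × {d : ℝ // 0 < d},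
      w.2.1 ≤ d.1 ∧ w.1 p = 0 ∧ LittleLip w.1 ∧ (∀ s t, |w.1 s - w.1 t| ≤ dist s t) ∧
      (∀ s t, d.1 ≤ dist s t → |(G s - G t) - (w.1 s - w.1 t)| ≤ ρ * dist s t) ∧
      (∀ s t, dist s t < w.2.1 → |w.1 s - w.1 t| ≤ ρ * dist s t) := by
    rintro ⟨d, hd⟩
    obtain ⟨g, hg1, hg2, hg3, hg4⟩ := approx hB' G hGp 1 one_pos
      (fun s t => by rw [one_mul]; exact hG s t) (ρ*d/2) (by positivity)
    obtain ⟨δl, hδl, hlit⟩ := hg2 ρ hρ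
    refine ⟨⟨g, ⟨min d δl, lt_min hd hδl⟩⟩, min_le_left _ _, hg1, hg2,
      (fun s t => by have := hg3 s t; rw [one_mul] at this; exact this), ?_, ?_⟩
    · intro s t hst
      have e1 := hg4 s
      have e2 := hg4 t
      have key2 : |(G s - G t) - (g s - g t)| ≤ ρ * d := by
        calc |(G s - G t) - (g s - g t)| = |(g s - G s) - (g t - G t)| := by
              rw [show (G s - G t) - (g s - g t) = -((g s - G s) - (g t - G t)) by ring, abs_neg]
          _ ≤ |g s - G s| + |g t - G t| := abs_sub _ _
          _ ≤ ρ*d/2 + ρ*d/2 := add_le_add e1 e2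
          _ = ρ * d := by ring
      calc |(G s - G t) - (g s - g t)| ≤ ρ * d := key2
        _ ≤ ρ * dist s t := mul_le_mul_of_nonneg_left hst (le_of_lt hρ)
    · intro s t hst
      exact hlit s t (lt_of_lt_of_le hst (by simp only; exact min_le_right _ _))
  choose stepf hstep using key
  set Δseq : ℕ → {d : ℝ // 0 < d} :=
    fun i => Nat.rec ⟨δ₀, hδ₀⟩ (fun _ ih => (stepf ih).2) i with hΔseq
  refine ⟨fun i => (stepf (Δseq i)).1, fun i => (Δseq i).1, le_refl _,
    fun i => (Δseq i).2, ?_, ?_, ?_, ?_, ?_, ?_⟩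
  · intro i
    exact (hstep (Δseq i)).1
  · intro i
    exact (hstep (Δseq i)).2.1
  · intro i
    exact (hstep (Δseq i)).2.2.1
  · intro i
    exact (hstep (Δseq i)).2.2.2.1
  · intro i
    exact (hstep (Δseq i)).2.2.2.2.1
  · intro i
    exact (hstep (Δseq i)).2.2.2.2.2

lemma sum_bound (t Δ : ℕ → ℝ) (n : ℕ) (d ρ : ℝ) (hρ : 0 ≤ ρ)
    (hmono : ∀ j k, j ≤ k → Δ k ≤ Δ j)
    (ht2 : ∀ i, t i ≤ 2) (htρ : ∀ i, Δ i ≤ d → t i ≤ ρ)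
    (ht1 : ∀ i, d < Δ (i+1) → t i ≤ 1 + ρ) :
    ∑ i ∈ Finset.range n, t i ≤ n * (1 + ρ) + 1 := by
  classical
  have hkey : ∃ j : ℕ, ∀ i, i < n → t i ≤ (1 + ρ) + (if i = j then 1 else 0) := by
    by_cases hex : ∃ k, k < n ∧ Δ k ≤ d
    · set k₀ := Nat.find hex with hk₀def
      have hk₀ := Nat.find_spec hex
      refine ⟨k₀ - 1, fun i hi => ?_⟩
      rcases lt_trichotomy (i+1) k₀ with h1 | h2 | h3
      · have hnot := Nat.find_min hex h1
        push_neg at hnot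
        have hd := hnot (lt_trans h1 hk₀.1)
        have hb := ht1 i hd
        have hind : (0:ℝ) ≤ (if i = k₀ - 1 then (1:ℝ) else 0) := by
          split <;> norm_num
        linarith
      · have hieq : i = k₀ - 1 := by omega
        rw [if_pos hieq]
        have := ht2 i
        linarith
      · have hki : k₀ ≤ i := by omega
        have hb := htρ i (le_trans (hmono k₀ i hki) hk₀.2)
        have hind : (0:ℝ) ≤ (if i = k₀ - 1 then (1:ℝ) else 0) := by
          split <;> norm_num
        linarith
    · push_neg at hex
      refine ⟨n - 1, fun i hi => ?_⟩
      by_cases hi1 : i + 1 < n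
      · have hb := ht1 i (hex (i+1) hi1)
        have hind : (0:ℝ) ≤ (if i = n - 1 then (1:ℝ) else 0) := by
          split <;> norm_num
        linarith
      · have hieq : i = n - 1 := by omega
        rw [if_pos hieq]
        have := ht2 i
        linarith
  obtain ⟨j, hj⟩ := hkey
  calc ∑ i ∈ Finset.range n, t i
      ≤ ∑ i ∈ Finset.range n, ((1+ρ) + (if i = j then (1:ℝ) else 0)) :=
        Finset.sum_le_sum (fun i hi => hj i (Finset.mem_range.1 hi))
    _ = n * (1+ρ) + ∑ i ∈ Finset.range n, (if i = j then (1:ℝ) else 0) := by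
        rw [Finset.sum_add_distrib, Finset.sum_const, Finset.card_range, nsmul_eq_mul]
    _ ≤ n * (1+ρ) + 1 := by
        have hs : ∑ i ∈ Finset.range n, (if i = j then (1:ℝ) else 0) ≤ 1 := by
          rw [Finset.sum_ite_eq' (Finset.range n) j (fun _ => (1:ℝ))]
          split <;> norm_num
        linarith

lemma rep_sum {ι : Type*} (s : Finset ι) (F : ι → ↥(deLeeuwSubmodule M p)) :
    rep (∑ i ∈ s, F i) = fun t => ∑ i ∈ s, rep (F i) t := by
  classical
  apply rep_unique
  · simp [rep_p]
  · intro q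
    have hd : (0:ℝ) < dist q.1.1 q.1.2 := dd_pos q
    have h1 : ((∑ i ∈ s, F i : ↥(deLeeuwSubmodule M p)) : B) q
        = ∑ i ∈ s, ((F i : ↥(deLeeuwSubmodule M p)) : B) q := by
      induction s using Finset.induction with
      | empty => rfl
      | @insert a s' ha ih =>
        rw [Finset.sum_insert ha, Finset.sum_insert ha, coe_add_apply, ih]
    rw [h1]
    rw [Finset.sum_congr rfl (fun i _ => rep_eq (F i) q)]
    rw [← Finset.sum_div, Finset.sum_sub_distrib]

lemma Pfun_sub (hB' : CondB p) (φ : NDual ↥(deLeeuwSubmodule M p))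
    (h₁ h₂ : ↥(deLeeuwSubmodule M p)) :
    Pfun hB' φ (h₁ - h₂) = Pfun hB' φ h₁ - Pfun hB' φ h₂ := by
  rw [← Pmap_apply hB' φ (h₁ - h₂), ← Pmap_apply hB' φ h₁, ← Pmap_apply hB' φ h₂]
  exact map_sub (Pmap hB' φ) h₁ h₂

end MI7

namespace MI8
open MI MI2 MI3 MI4 MI5 MI6 MI7 Filter Topology
variable {M : Type*} [MetricSpace M] [CompactSpace M] {p : M}
local notation "B" => BoundedContinuousFunction (OffDiag M) ℝ

lemma coe_sum_apply {ι : Type*} (s : Finset ι) (F : ι → ↥(deLeeuwSubmodule M p)) (q : OffDiag M) :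
    ((∑ i ∈ s, F i : ↥(deLeeuwSubmodule M p)) : B) q
      = ∑ i ∈ s, ((F i : ↥(deLeeuwSubmodule M p)) : B) q := by
  classical
  induction s using Finset.induction with
  | empty => rfl
  | @insert a s' ha ih =>
    rw [Finset.sum_insert ha, Finset.sum_insert ha, coe_add_apply, ih]

set_option maxHeartbeats 2000000 in
lemma norm_ge (hB' : CondB p) (φ : NDual ↥(deLeeuwSubmodule M p))
    (n : ℕ) (hn : 1 ≤ n) (η : ℝ) (hη : 0 < η) :
    ‖Pmap hB' φ‖ + ‖φ - Pmap hB' φ‖ ≤ ‖φ‖ * (1 + 1/(n:ℝ) + 3*η) + 4*η := by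
  classical
  have hn1 : (1:ℝ) ≤ (n:ℝ) := by exact_mod_cast hn
  have hnpos : (0:ℝ) < (n:ℝ) := lt_of_lt_of_le zero_lt_one hn1
  have hnne : (n:ℝ) ≠ 0 := ne_of_gt hnpos
  set σ := φ - Pmap hB' φ with hσdef
  have hσ0 : ∀ e : ↥(deLeeuwSubmodule M p), LittleLip (rep e) → σ e = 0 := by
    intro e he
    rw [hσdef, ContinuousLinearMap.sub_apply, Pmap_apply, Pfun_little hB' φ e he, sub_self]
  -- Claim F data
  obtain ⟨δs, hδs, ε', hε', hF⟩ := claimF hB' φ η hη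
  -- the little near-maximizer e
  obtain ⟨h₁, hh₁, hTh₁⟩ := exists_near (Pmap hB' φ) η hη
  have htend₁ := Pfun_tendsto hB' φ h₁
  rw [Metric.tendsto_atTop] at htend₁
  obtain ⟨N₀, hN₀⟩ := htend₁ η hη
  obtain ⟨M₁, hM₁⟩ := nat_div_le 1 η (by norm_num) hη
  set m₀ := max N₀ M₁ with hm₀def
  set eE := hseqE hB' h₁ m₀ with heEdef
  have heE_lit : LittleLip (rep eE) := hseq_little hB' h₁ m₀
  have heE_norm : ‖eE‖ ≤ 1 + η := by
    have h1 := hseq_norm_le hB' h₁ m₀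
    have h2 := hM₁ m₀ (le_max_right _ _)
    have := hh₁
    calc ‖eE‖ ≤ ‖h₁‖ + 1/(m₀+1) := h1
      _ ≤ 1 + η := by push_cast at h2 ⊢; linarith
  have heE_φ : ‖Pmap hB' φ‖ - 2*η ≤ φ eE := by
    have h1 := hN₀ m₀ (le_max_left _ _)
    rw [Real.dist_eq] at h1
    have h2 : Pfun hB' φ h₁ - η < φ (hseqE hB' h₁ m₀) := by
      have := abs_lt.1 h1
      linarith [this.1]
    have h3 : Pmap hB' φ h₁ = Pfun hB' φ h₁ := Pmap_apply hB' φ h₁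
    rw [heEdef]
    linarith
  -- littleness threshold of eE
  obtain ⟨δ₁, hδ₁, hlit₁⟩ := heE_lit η hη
  set δ₀ := min δ₁ δs with hδ₀def
  have hδ₀ : 0 < δ₀ := lt_min hδ₁ hδs
  -- the near-maximizer w for σ
  obtain ⟨w, hw, hσw⟩ := exists_near σ η hη
  set G := rep w with hGdef
  have hGp : G p = 0 := rep_p w
  have hG : ∀ s t, |G s - G t| ≤ dist s t := by
    intro s t
    have h1 := rep_lip w s t
    have h2 : ‖w‖ * dist s t ≤ dist s t := by
      have := dist_nonneg (x := s) (y := t)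
      nlinarith
    exact le_trans h1 h2
  -- the chain
  set ρ := min η (ε'/4) with hρdef
  have hρ : 0 < ρ := lt_min hη (by linarith)
  have hρη : ρ ≤ η := min_le_left _ _
  have hρε : ρ ≤ ε'/4 := min_le_right _ _
  obtain ⟨g, Δ, hΔ0, hΔpos, hΔdec, hgp, hglit, hglip, happrox, hgsmall⟩ :=
    chain hB' G hGp hG ρ hρ δ₀ hδ₀
  have hΔmono : ∀ j k, j ≤ k → Δ k ≤ Δ j := fun j k hjk =>
    antitone_nat_of_succ_le hΔdec hjk
  -- elements gE and sE
  set gE : ℕ → ↥(deLeeuwSubmodule M p) := fun i =>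
    mkE p (g i) (hgp i) 1 (fun s t => by rw [one_mul]; exact hglip i s t) zero_le_one
    with hgEdef
  have hrep_gE : ∀ i, rep (gE i) = g i := fun i => rep_mkE _ _ _ _ _
  set sE : ↥(deLeeuwSubmodule M p) := (n:ℝ)⁻¹ • (∑ i ∈ Finset.range n, gE i) with hsEdef
  have hrep_sE : rep sE = fun t => (n:ℝ)⁻¹ * ∑ i ∈ Finset.range n, g i t := by
    rw [hsEdef, rep_smul, rep_sum]
    funext t
    simp only
    congr 1
    apply Finset.sum_congr rfl
    intro i _
    rw [hrep_gE i]
  have hsE_lit : LittleLip (rep sE) := by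
    rw [hrep_sE]
    exact littleLip_smul _ (littleLip_sum _ _ (fun i _ => hglit i))
  have hgE_q : ∀ i q, |(gE i : B) q| ≤ 1 := by
    intro i q
    apply abs_coe_le
    rw [hrep_gE i, one_mul]
    exact hglip i _ _
  have hwq : ∀ q : OffDiag M, |(w : B) q| ≤ 1 := by
    intro q
    have h1 := (w : B).norm_coe_le_norm q
    rw [Real.norm_eq_abs, ← coe_norm w] at h1
    linarith
  have hsE_q : ∀ q : OffDiag M, (sE : B) q
      = (n:ℝ)⁻¹ * ∑ i ∈ Finset.range n, (gE i : B) q := by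
    intro q
    rw [hsEdef, coe_smul_apply, coe_sum_apply]
  have hsE_norm : ‖sE‖ ≤ 1 := by
    rw [coe_norm sE, BoundedContinuousFunction.norm_le zero_le_one]
    intro q
    rw [Real.norm_eq_abs, hsE_q q, abs_mul, abs_inv, Nat.abs_cast]
    have hsum : |∑ i ∈ Finset.range n, (gE i : B) q| ≤ (n:ℝ) := by
      calc |∑ i ∈ Finset.range n, (gE i : B) q|
          ≤ ∑ i ∈ Finset.range n, |(gE i : B) q| := Finset.abs_sum_le_sum_abs _ _
        _ ≤ ∑ _i ∈ Finset.range n, (1:ℝ) := Finset.sum_le_sum (fun i _ => hgE_q i q)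
        _ = (n:ℝ) := by simp
    calc (n:ℝ)⁻¹ * |∑ i ∈ Finset.range n, (gE i : B) q|
        ≤ (n:ℝ)⁻¹ * (n:ℝ) := mul_le_mul_of_nonneg_left hsum (by positivity)
      _ = 1 := inv_mul_cancel₀ hnne
  -- the combined element x
  set xE := eE + w - sE with hxEdef
  have hxq : ∀ q : OffDiag M, (xE : B) q
      = (eE : B) q + (n:ℝ)⁻¹ * ∑ i ∈ Finset.range n,
        ((w - gE i : ↥(deLeeuwSubmodule M p)) : B) q := by
    intro q
    have hL : (xE : B) q = (eE : B) q + (w : B) q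
        - (n:ℝ)⁻¹ * ∑ i ∈ Finset.range n, (gE i : B) q := by
      rw [hxEdef]
      rw [coe_sub_apply (eE + w) sE, coe_add_apply, hsE_q q]
    have hR : ∑ i ∈ Finset.range n, ((w - gE i : ↥(deLeeuwSubmodule M p)) : B) q
        = (n:ℝ) * (w : B) q - ∑ i ∈ Finset.range n, (gE i : B) q := by
      rw [Finset.sum_congr rfl (fun i _ => coe_sub_apply w (gE i) q),
        Finset.sum_sub_distrib, Finset.sum_const, Finset.card_range, nsmul_eq_mul]
    rw [hL, hR]
    field_simp
    ring
  -- pointwise bounds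
  have htρcase : ∀ i (q : OffDiag M), Δ i ≤ dd q →
      |((w - gE i : ↥(deLeeuwSubmodule M p)) : B) q| ≤ ρ := by
    intro i q hi
    apply abs_coe_le
    rw [rep_sub]
    simp only
    rw [hrep_gE i, ← hGdef]
    have e1 : G q.1.1 - g i q.1.1 - (G q.1.2 - g i q.1.2)
        = (G q.1.1 - G q.1.2) - (g i q.1.1 - g i q.1.2) := by ring
    rw [e1]
    exact happrox i _ _ hi
  have ht2case : ∀ i (q : OffDiag M),
      |((w - gE i : ↥(deLeeuwSubmodule M p)) : B) q| ≤ 2 := by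
    intro i q
    rw [coe_sub_apply]
    calc |(w : B) q - (gE i : B) q| ≤ |(w : B) q| + |(gE i : B) q| := abs_sub _ _
      _ ≤ 1 + 1 := add_le_add (hwq q) (hgE_q i q)
      _ = 2 := by norm_num
  have ht1case : ∀ i (q : OffDiag M), dd q < Δ (i+1) →
      |((w - gE i : ↥(deLeeuwSubmodule M p)) : B) q| ≤ 1 + ρ := by
    intro i q hi
    rw [coe_sub_apply]
    have h2 : |(gE i : B) q| ≤ ρ := by
      apply abs_coe_le
      rw [hrep_gE i]
      exact hgsmall i _ _ hi
    calc |(w : B) q - (gE i : B) q| ≤ |(w : B) q| + |(gE i : B) q| := abs_sub _ _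
      _ ≤ 1 + ρ := add_le_add (hwq q) h2
  have hxbound : ∀ q : OffDiag M, |(xE : B) q| ≤ 1 + 1/(n:ℝ) + 3*η := by
    intro q
    have hsum := sum_bound (fun i => |((w - gE i : ↥(deLeeuwSubmodule M p)) : B) q|) Δ n
      (dd q) ρ (le_of_lt hρ) hΔmono (fun i => ht2case i q) (fun i hi => htρcase i q hi)
      (fun i hi => ht1case i q hi)
    have habs : |(xE : B) q| ≤ |(eE : B) q| + (n:ℝ)⁻¹ * ∑ i ∈ Finset.range n,
        |((w - gE i : ↥(deLeeuwSubmodule M p)) : B) q| := by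
      rw [hxq q]
      calc |(eE : B) q + (n:ℝ)⁻¹ * ∑ i ∈ Finset.range n,
            ((w - gE i : ↥(deLeeuwSubmodule M p)) : B) q|
          ≤ |(eE : B) q| + |(n:ℝ)⁻¹ * ∑ i ∈ Finset.range n,
            ((w - gE i : ↥(deLeeuwSubmodule M p)) : B) q| := abs_add_le _ _
        _ ≤ |(eE : B) q| + (n:ℝ)⁻¹ * ∑ i ∈ Finset.range n,
            |((w - gE i : ↥(deLeeuwSubmodule M p)) : B) q| := by
            rw [abs_mul, abs_inv, Nat.abs_cast]
            have := Finset.abs_sum_le_sum_abs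
              (fun i => ((w - gE i : ↥(deLeeuwSubmodule M p)) : B) q) (Finset.range n)
            have hinv : (0:ℝ) ≤ (n:ℝ)⁻¹ := by positivity
            nlinarith
    rcases lt_or_ge (dd q) δ₀ with hnear | hfar
    · have heq : |(eE : B) q| ≤ η := by
        apply abs_coe_le
        apply hlit₁
        exact lt_of_lt_of_le hnear (min_le_left _ _)
      have hs2 : (n:ℝ)⁻¹ * ∑ i ∈ Finset.range n,
          |((w - gE i : ↥(deLeeuwSubmodule M p)) : B) q| ≤ (1+ρ) + (n:ℝ)⁻¹ := by
        calc (n:ℝ)⁻¹ * ∑ i ∈ Finset.range n,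
            |((w - gE i : ↥(deLeeuwSubmodule M p)) : B) q|
            ≤ (n:ℝ)⁻¹ * ((n:ℝ) * (1+ρ) + 1) := by
              apply mul_le_mul_of_nonneg_left hsum (by positivity)
          _ = (1+ρ) + (n:ℝ)⁻¹ := by field_simp
      have h1n : (n:ℝ)⁻¹ = 1/(n:ℝ) := (one_div (n:ℝ)).symm
      calc |(xE : B) q| ≤ η + ((1+ρ) + (n:ℝ)⁻¹) := by linarith [habs, heq, hs2]
        _ ≤ 1 + 1/(n:ℝ) + 3*η := by rw [← h1n]; linarith
    · have heq : |(eE : B) q| ≤ 1 + η := by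
        have h1 := (eE : B).norm_coe_le_norm q
        rw [Real.norm_eq_abs, ← coe_norm eE] at h1
        linarith
      have hsum2 : ∑ i ∈ Finset.range n,
          |((w - gE i : ↥(deLeeuwSubmodule M p)) : B) q| ≤ (n:ℝ) * ρ := by
        calc ∑ i ∈ Finset.range n, |((w - gE i : ↥(deLeeuwSubmodule M p)) : B) q|
            ≤ ∑ _i ∈ Finset.range n, ρ := by
              apply Finset.sum_le_sum
              intro i _
              apply htρcase i q
              calc Δ i ≤ Δ 0 := hΔmono 0 i (Nat.zero_le i)
                _ ≤ δ₀ := hΔ0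
                _ ≤ dd q := hfar
          _ = (n:ℝ) * ρ := by rw [Finset.sum_const, Finset.card_range, nsmul_eq_mul]
      have hs2 : (n:ℝ)⁻¹ * ∑ i ∈ Finset.range n,
          |((w - gE i : ↥(deLeeuwSubmodule M p)) : B) q| ≤ ρ := by
        calc (n:ℝ)⁻¹ * ∑ i ∈ Finset.range n,
            |((w - gE i : ↥(deLeeuwSubmodule M p)) : B) q|
            ≤ (n:ℝ)⁻¹ * ((n:ℝ) * ρ) := by
              apply mul_le_mul_of_nonneg_left hsum2 (by positivity)
          _ = ρ := by field_simp
      have hinvn : (0:ℝ) ≤ 1/(n:ℝ) := by positivity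
      calc |(xE : B) q| ≤ (1 + η) + ρ := by linarith [habs, heq, hs2]
        _ ≤ 1 + 1/(n:ℝ) + 3*η := by linarith
  have hxnorm : ‖xE‖ ≤ 1 + 1/(n:ℝ) + 3*η := by
    rw [coe_norm xE, BoundedContinuousFunction.norm_le (by positivity)]
    intro q
    rw [Real.norm_eq_abs]
    exact hxbound q
  -- φ x decomposition
  have hφx : φ xE = φ eE + σ w + Pfun hB' φ (w - sE) := by
    have e1 : φ xE = φ eE + φ w - φ sE := by
      rw [hxEdef]
      have := map_sub φ (eE + w) sE
      rw [this, map_add φ eE w]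
    have e2 : σ w = φ w - Pfun hB' φ w := by
      rw [hσdef, ContinuousLinearMap.sub_apply, Pmap_apply]
    have e3 : φ sE = Pfun hB' φ sE := (Pfun_little hB' φ sE hsE_lit).symm
    have e4 : Pfun hB' φ (w - sE) = Pfun hB' φ w - Pfun hB' φ sE := Pfun_sub hB' φ w sE
    rw [e1, e2, e4, e3]
    ring
  -- bound on Pfun φ (w - sE)
  have hwsE_lit : LittleLip (rep (w - sE)) → False ∨ True := fun _ => Or.inr trivial
  have hPw : |Pfun hB' φ (w - sE)| ≤ η := by
    set em : ℕ → ↥(deLeeuwSubmodule M p) := fun m => hseqE hB' w m - sE with hemdef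
    have hem_lit : ∀ m, LittleLip (rep (em m)) := by
      intro m
      rw [hemdef]
      simp only
      rw [rep_sub]
      exact littleLip_sub (hseq_little hB' w m) hsE_lit
    have hem_bd : ∀ m, ‖em m‖ ≤ 3 := by
      intro m
      rw [hemdef]
      simp only
      calc ‖hseqE hB' w m - sE‖ ≤ ‖hseqE hB' w m‖ + ‖sE‖ := by
            exact norm_sub_le (hseqE hB' w m) sE
        _ ≤ (‖w‖ + 1/(m+1)) + 1 := add_le_add (hseq_norm_le hB' w m) hsE_norm
        _ ≤ 3 := by
            have := one_div_nat_le_one m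
            linarith
    have hem_cv : ∀ β > (0:ℝ), ∀ ε > (0:ℝ), ∃ N, ∀ m ≥ N, ∀ q : OffDiag M, β ≤ dd q →
        |((em m - (w - sE) : ↥(deLeeuwSubmodule M p)) : B) q| ≤ ε := by
      intro β hβ ε hε
      obtain ⟨N, hN⟩ := nat_div_le (2/β) ε (by positivity) hε
      refine ⟨N, fun m hm q hq => ?_⟩
      have e1 : ((em m - (w - sE) : ↥(deLeeuwSubmodule M p)) : B) q
          = -(((w - hseqE hB' w m : ↥(deLeeuwSubmodule M p)) : B) q) := by
        rw [hemdef]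
        simp only [coe_sub_apply]
        ring
      rw [e1, abs_neg]
      have c1 := hseq_close hB' w m β hβ q hq
      calc |((w - hseqE hB' w m : ↥(deLeeuwSubmodule M p)) : B) q| ≤ 2/(((m:ℝ)+1)*β) := c1
        _ = (2/β)/((m:ℝ)+1) := by field_simp
        _ ≤ ε := hN m hm
    have htendem := tendsto_of_approx hB' φ (w - sE) em 3 hem_lit hem_bd hem_cv
    obtain ⟨M₂, hM₂⟩ := nat_div_le (2/δs) (ε'/2) (by positivity) (by linarith)
    have hevent : ∀ m ≥ M₂, |φ (em m)| ≤ η := by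
      intro m hm
      apply hF (em m) (hem_lit m) (hem_bd m)
      intro q hq
      have e1 : ((em m : ↥(deLeeuwSubmodule M p)) : B) q
          = -(((w - hseqE hB' w m : ↥(deLeeuwSubmodule M p)) : B) q)
            + ((w - sE : ↥(deLeeuwSubmodule M p)) : B) q := by
        rw [hemdef]
        simp only [coe_sub_apply]
        ring
      have c1 : |((w - hseqE hB' w m : ↥(deLeeuwSubmodule M p)) : B) q| ≤ ε'/2 := by
        have := hseq_close hB' w m δs hδs q hq
        calc |((w - hseqE hB' w m : ↥(deLeeuwSubmodule M p)) : B) q| ≤ 2/(((m:ℝ)+1)*δs) := this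
          _ = (2/δs)/((m:ℝ)+1) := by field_simp
          _ ≤ ε'/2 := hM₂ m hm
      have c2 : |((w - sE : ↥(deLeeuwSubmodule M p)) : B) q| ≤ ρ := by
        have e2 : ((w - sE : ↥(deLeeuwSubmodule M p)) : B) q = (n:ℝ)⁻¹ *
            ∑ i ∈ Finset.range n, ((w - gE i : ↥(deLeeuwSubmodule M p)) : B) q := by
          rw [coe_sub_apply, hsE_q q]
          have hR : ∑ i ∈ Finset.range n, ((w - gE i : ↥(deLeeuwSubmodule M p)) : B) q
              = (n:ℝ) * (w : B) q - ∑ i ∈ Finset.range n, (gE i : B) q := by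
            rw [Finset.sum_congr rfl (fun i _ => coe_sub_apply w (gE i) q),
              Finset.sum_sub_distrib, Finset.sum_const, Finset.card_range, nsmul_eq_mul]
          rw [hR]
          field_simp
        rw [e2, abs_mul, abs_inv, Nat.abs_cast]
        have hsum2 : |∑ i ∈ Finset.range n,
            ((w - gE i : ↥(deLeeuwSubmodule M p)) : B) q| ≤ (n:ℝ) * ρ := by
          calc |∑ i ∈ Finset.range n, ((w - gE i : ↥(deLeeuwSubmodule M p)) : B) q|
              ≤ ∑ i ∈ Finset.range n,
                |((w - gE i : ↥(deLeeuwSubmodule M p)) : B) q| :=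
                Finset.abs_sum_le_sum_abs _ _
            _ ≤ ∑ _i ∈ Finset.range n, ρ := by
                apply Finset.sum_le_sum
                intro i _
                apply htρcase i q
                calc Δ i ≤ Δ 0 := hΔmono 0 i (Nat.zero_le i)
                  _ ≤ δ₀ := hΔ0
                  _ ≤ δs := min_le_right _ _
                  _ ≤ dd q := hq
            _ = (n:ℝ) * ρ := by rw [Finset.sum_const, Finset.card_range, nsmul_eq_mul]
        calc (n:ℝ)⁻¹ * |∑ i ∈ Finset.range n,
            ((w - gE i : ↥(deLeeuwSubmodule M p)) : B) q| ≤ (n:ℝ)⁻¹ * ((n:ℝ) * ρ) :=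
              mul_le_mul_of_nonneg_left hsum2 (by positivity)
          _ = ρ := by field_simp
      calc |((em m : ↥(deLeeuwSubmodule M p)) : B) q|
          ≤ |((w - hseqE hB' w m : ↥(deLeeuwSubmodule M p)) : B) q|
            + |((w - sE : ↥(deLeeuwSubmodule M p)) : B) q| := by
            rw [e1]
            calc |-(((w - hseqE hB' w m : ↥(deLeeuwSubmodule M p)) : B) q)
                + ((w - sE : ↥(deLeeuwSubmodule M p)) : B) q|
                ≤ |-(((w - hseqE hB' w m : ↥(deLeeuwSubmodule M p)) : B) q)|
                  + |((w - sE : ↥(deLeeuwSubmodule M p)) : B) q| := abs_add_le _ _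
              _ = |((w - hseqE hB' w m : ↥(deLeeuwSubmodule M p)) : B) q|
                  + |((w - sE : ↥(deLeeuwSubmodule M p)) : B) q| := by rw [abs_neg]
        _ ≤ ε'/2 + ρ := add_le_add c1 c2
        _ ≤ ε' := by linarith
    apply le_of_tendsto htendem.abs
    rw [eventually_atTop]
    exact ⟨M₂, hevent⟩
  -- final assembly
  have hφxb : |φ xE| ≤ ‖φ‖ * (1 + 1/(n:ℝ) + 3*η) := by
    calc |φ xE| ≤ ‖φ‖ * ‖xE‖ := by
          have := φ.le_opNorm xE
          rwa [Real.norm_eq_abs] at this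
      _ ≤ ‖φ‖ * (1 + 1/(n:ℝ) + 3*η) :=
          mul_le_mul_of_nonneg_left hxnorm (norm_nonneg φ)
  have hfin : ‖Pmap hB' φ‖ + ‖σ‖ ≤ φ eE + σ w + 3*η := by linarith [heE_φ, hσw]
  have hfin2 : φ eE + σ w = φ xE - Pfun hB' φ (w - sE) := by linarith [hφx]
  have hfin3 : φ xE - Pfun hB' φ (w - sE) ≤ |φ xE| + η := by
    have h1 := le_abs_self (φ xE)
    have h2 := neg_abs_le (Pfun hB' φ (w - sE))
    linarith [abs_le.1 hPw]
  calc ‖Pmap hB' φ‖ + ‖σ‖ ≤ φ eE + σ w + 3*η := hfin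
    _ = φ xE - Pfun hB' φ (w - sE) + 3*η := by rw [hfin2]
    _ ≤ |φ xE| + η + 3*η := by linarith [hfin3]
    _ ≤ ‖φ‖ * (1 + 1/(n:ℝ) + 3*η) + 4*η := by linarith [hφxb]

lemma norm_eq (hB' : CondB p) (φ : NDual ↥(deLeeuwSubmodule M p)) :
    ‖φ‖ = ‖Pmap hB' φ‖ + ‖φ - Pmap hB' φ‖ := by
  apply le_antisymm
  · calc ‖φ‖ = ‖Pmap hB' φ + (φ - Pmap hB' φ)‖ := by
          congr 1
          abel
      _ ≤ ‖Pmap hB' φ‖ + ‖φ - Pmap hB' φ‖ := norm_add_le _ _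
  · apply le_of_forall_pos_le_add
    intro ζ hζ
    obtain ⟨N, hN⟩ := nat_div_le ‖φ‖ (ζ/2) (norm_nonneg φ) (by linarith)
    set n := N + 1 with hndef
    have hn1 : 1 ≤ n := by omega
    have hnval : ‖φ‖ * (1/(n:ℝ)) ≤ ζ/2 := by
      have h1 := hN N (le_refl N)
      have h2 : ((N:ℝ)+1) = (n:ℝ) := by rw [hndef]; push_cast; ring
      rw [h2] at h1
      have hnpos : (0:ℝ) < (n:ℝ) := by
        rw [← h2]; positivity
      calc ‖φ‖ * (1/(n:ℝ)) = ‖φ‖/(n:ℝ) := by ring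
        _ ≤ ζ/2 := h1
    set η := ζ / (2*(3*‖φ‖+5)) with hηdef
    have hη : 0 < η := by
      rw [hηdef]
      have : (0:ℝ) < 3*‖φ‖+5 := by nlinarith [norm_nonneg φ]
      positivity
    have hηb : (3*‖φ‖+4)*η ≤ ζ/2 := by
      rw [hηdef, ← mul_div_assoc,
        div_le_div_iff₀ (by nlinarith [norm_nonneg φ] : (0:ℝ) < 2*(3*‖φ‖+5))
          (by norm_num : (0:ℝ) < 2)]
      nlinarith [norm_nonneg φ, le_of_lt hζ]
    have key := norm_ge hB' φ n hn1 η hη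
    have hexpand : ‖φ‖ * (1 + 1/(n:ℝ) + 3*η) + 4*η
        = ‖φ‖ + ‖φ‖ * (1/(n:ℝ)) + (3*‖φ‖+4)*η := by ring
    rw [hexpand] at key
    linarith

end MI8

/-- If a compact pointed metric space satisfies condition (B'), then
`λ = Λ ∩ C₀(L)` is an M-ideal in `Λ`, the image of `Lip₀(M)` under the de Leeuw
transform. -/
theorem littleLip_isMIdeal {M : Type*} [MetricSpace M] [CompactSpace M] (p : M)
    (hB' : ∀ F : M → ℝ, F p = 0 → (∀ s t : M, |F s - F t| ≤ dist s t) → ∀ ε > (0 : ℝ),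
      ∃ f : M → ℝ, f p = 0 ∧ LittleLip f ∧ (∀ s t : M, |f s - f t| ≤ dist s t) ∧
        ∀ t : M, |f t - F t| ≤ ε) :
    IsMIdeal {h : ↥(deLeeuwSubmodule M p) |
      ZeroAtInfty (h : BoundedContinuousFunction (OffDiag M) ℝ)} := by
  classical
  refine ⟨MI6.PP hB', fun φ => MI6.P_idem hB' φ, fun φ => ?_, fun φ => MI8.norm_eq hB' φ⟩
  constructor
  · intro h0 y hy
    exact (MI6.P_zero_iff hB' φ).1 h0 y (MI2.little_of_zeroAtInfty y hy)
  · intro hv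
    exact (MI6.P_zero_iff hB' φ).2 (fun y hy => hv y (MI2.zeroAtInfty_of_little y hy))
end

section
/- Let (M,d) be a compact metric space with base point p and let P be a countable dense subset of M. Then the following are equivalent: (B) for every Lipschitz F : M → ℝ with F(p) = 0 and ‖F‖_Lip ≤ 1, every finite subset S ⊆ P and every ε > 0 there is a little Lipschitz f with f(p) = 0, ‖f‖_Lip ≤ 1 and |f(t) − F(t)| ≤ ε for all t ∈ S; (B') for every such F and every ε > 0 there is a little Lipschitz f with f(p) = 0, ‖f‖_Lip ≤ 1 and sup_{t∈M} |f(t) − F(t)| ≤ ε. -/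
/-- For a compact pointed metric space with a countable dense subset `P`, condition (B)
(approximation of unit-ball Lipschitz functions by unit-ball little Lipschitz functions
pointwise on finite subsets of `P`) is equivalent to condition (B') (approximation
uniformly on `M`). -/
theorem conditionB_iff_conditionB' {M : Type*} [MetricSpace M] [CompactSpace M] (p : M)
    (P : Set M) (hPc : P.Countable) (hPd : Dense P) :
    (∀ F : M → ℝ, F p = 0 → (∀ s t : M, |F s - F t| ≤ dist s t) →
        ∀ S : Set M, S ⊆ P → S.Finite → ∀ ε > (0 : ℝ),
          ∃ f : M → ℝ, f p = 0 ∧ LittleLip f ∧ (∀ s t : M, |f s - f t| ≤ dist s t) ∧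
            ∀ t ∈ S, |f t - F t| ≤ ε) ↔
      (∀ F : M → ℝ, F p = 0 → (∀ s t : M, |F s - F t| ≤ dist s t) → ∀ ε > (0 : ℝ),
          ∃ f : M → ℝ, f p = 0 ∧ LittleLip f ∧ (∀ s t : M, |f s - f t| ≤ dist s t) ∧
            ∀ t : M, |f t - F t| ≤ ε) := by
  constructor
  · intro hB F hFp hFl ε hε
    -- find a finite (ε/4)-dense subset of P
    have hcover : (Set.univ : Set M) ⊆ ⋃ q ∈ P, Metric.ball q (ε / 4) := by
      intro x _
      obtain ⟨q, hqball, hqP⟩ := Metric.dense_iff.mp hPd x (ε / 4) (by linarith)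
      exact Set.mem_biUnion hqP (by
        simpa [Metric.mem_ball, dist_comm] using hqball)
    obtain ⟨S, hSP, hSfin, hScov⟩ :=
      isCompact_univ.elim_finite_subcover_image
        (fun q _ => Metric.isOpen_ball (x := q) (ε := ε / 4)) hcover
    obtain ⟨f, hfp, hfll, hfl, hfapp⟩ := hB F hFp hFl S hSP hSfin (ε / 2) (by linarith)
    refine ⟨f, hfp, hfll, hfl, fun t => ?_⟩
    obtain ⟨s, hs, hts⟩ := Set.mem_iUnion₂.mp (hScov (Set.mem_univ t))
    have hts' : dist t s < ε / 4 := by simpa [Metric.mem_ball] using hts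
    calc |f t - F t| = |(f t - f s) + (f s - F s) + (F s - F t)| := by ring_nf
      _ ≤ |(f t - f s) + (f s - F s)| + |F s - F t| := abs_add_le _ _
      _ ≤ |f t - f s| + |f s - F s| + |F s - F t| := by
          exact add_le_add_left (abs_add_le _ _) _
      _ ≤ dist t s + ε / 2 + dist s t := by
          exact add_le_add (add_le_add (hfl t s) (hfapp s hs)) (hFl s t)
      _ ≤ ε := by rw [dist_comm s t]; linarith
  · intro hB' F hFp hFl S _ _ ε hε
    obtain ⟨f, hfp, hfll, hfl, hfapp⟩ := hB' F hFp hFl ε hε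
    exact ⟨f, hfp, hfll, hfl, fun t _ => hfapp t⟩
end

section
/- Let (M,d) be a compact metric space with base point p and let 0 < α < 1. Then the snowflake M^α = (M, d^α) satisfies condition (B'): for every F : M → ℝ with F(p) = 0 and |F(s) − F(t)| ≤ d(s,t)^α for all s,t ∈ M, and for every ε > 0, there exists f : M → ℝ with f(p) = 0, |f(s) − f(t)| ≤ d(s,t)^α for all s,t, such that f is little Lipschitz with respect to d^α and sup_{t∈M} |f(t) − F(t)| ≤ ε. -/
/-- Every compact pointed metric space satisfies condition (B') for the snowflake metric
`d^α`, `0 < α < 1`: every `1`-Hölder function vanishing at the base point can be uniformly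
approximated by little Lipschitz (w.r.t. `d^α`) functions of Hölder constant at most `1`
vanishing at the base point. -/
theorem snowflake_conditionB' {M : Type*} [MetricSpace M] [CompactSpace M] (p : M)
    (α : ℝ) (hα0 : 0 < α) (hα1 : α < 1)
    (F : M → ℝ) (hFp : F p = 0) (hF : ∀ s t : M, |F s - F t| ≤ dist s t ^ α)
    (ε : ℝ) (hε : 0 < ε) :
    ∃ f : M → ℝ, f p = 0 ∧ (∀ s t : M, |f s - f t| ≤ dist s t ^ α) ∧
      (∀ ε' > (0 : ℝ), ∃ δ > (0 : ℝ), ∀ s t : M,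
        dist s t ^ α < δ → |f s - f t| ≤ ε' * dist s t ^ α) ∧
      ∀ t : M, |f t - F t| ≤ ε := by
  haveI : Nonempty M := ⟨p⟩
  have hα0' : α ≠ 0 := hα0.ne'
  have h1α : (0:ℝ) < 1 - α := by linarith
  set e := ε / 2 with he_def
  have he : 0 < e := by positivity
  set r1 := e ^ (1/α) with hr1_def
  have hr1 : 0 < r1 := Real.rpow_pos_of_pos he _
  have hr1α : r1 ^ α = e := by
    rw [hr1_def, ← Real.rpow_mul he.le, one_div_mul_cancel hα0', Real.rpow_one]
  set L := e / r1 with hL_def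
  have hL : 0 < L := div_pos he hr1
  set g : ℝ → ℝ := fun r => min (r ^ α) (L * r) with hg_def
  have g0 : g 0 = 0 := by simp [hg_def, Real.zero_rpow hα0']
  have g_nonneg : ∀ r, 0 ≤ r → 0 ≤ g r := fun r hr =>
    le_min (Real.rpow_nonneg hr α) (by positivity)
  have g_mono : ∀ x y, 0 ≤ x → x ≤ y → g x ≤ g y := fun x y hx hxy =>
    min_le_min (Real.rpow_le_rpow hx hxy hα0.le) (by nlinarith)
  have g_le_rpow : ∀ r, g r ≤ r ^ α := fun r => min_le_left _ _
  have g_le_lin : ∀ r, g r ≤ L * r := fun r => min_le_right _ _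
  have g_scale : ∀ x s : ℝ, 0 ≤ x → x ≤ s → 0 < s → (x / s) * g s ≤ g x := by
    intro x s hx hxs hs
    rw [hg_def]
    have hxs' : (0:ℝ) ≤ x / s := div_nonneg hx hs.le
    rw [mul_min_of_nonneg _ _ hxs']
    apply min_le_min
    · rcases eq_or_lt_of_le hx with h0 | hx0
      · simp [← h0, Real.zero_rpow hα0']
      · have hx1 : x ^ α * x ^ (1-α) = x := by
          rw [← Real.rpow_add hx0, show α + (1-α) = (1:ℝ) by ring, Real.rpow_one]
        have hs1 : s ^ (1-α) * s ^ α = s := by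
          rw [← Real.rpow_add hs, show (1-α) + α = (1:ℝ) by ring, Real.rpow_one]
        rw [div_mul_eq_mul_div, div_le_iff₀ hs]
        have hmid : x ^ α * x ^ (1-α) * s ^ α ≤ x ^ α * s ^ (1-α) * s ^ α := by
          have h := Real.rpow_le_rpow hx hxs h1α.le
          gcongr
        calc x * s ^ α = x ^ α * x ^ (1-α) * s ^ α := by rw [hx1]
          _ ≤ x ^ α * s ^ (1-α) * s ^ α := hmid
          _ = x ^ α * (s ^ (1-α) * s ^ α) := by ring
          _ = x ^ α * s := by rw [hs1]
    · have : x / s * (L * s) = L * x := by field_simp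
      exact le_of_eq this
  have g_subadd : ∀ x y : ℝ, 0 ≤ x → 0 ≤ y → g (x + y) ≤ g x + g y := by
    intro x y hx hy
    rcases eq_or_lt_of_le (add_nonneg hx hy) with h0 | hs
    · have hx0 : x = 0 := by linarith
      have hy0 : y = 0 := by linarith
      simp [hx0, hy0, g0]
    · have h1 := g_scale x (x+y) hx (by linarith) hs
      have h2 := g_scale y (x+y) hy (by linarith) hs
      have h3 : (x/(x+y)) * g (x+y) + (y/(x+y)) * g (x+y) = g (x+y) := by
        field_simp
      linarith
  have rpow_le : ∀ r : ℝ, 0 ≤ r → r ^ α ≤ e + g r := by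
    intro r hr
    rw [hg_def, ← min_add_add_left]
    apply le_min
    · linarith
    · rcases le_total r r1 with h | h
      · have h1 : r ^ α ≤ e := by rw [← hr1α]; exact Real.rpow_le_rpow hr h hα0.le
        nlinarith
      · have hr0 : 0 < r := lt_of_lt_of_le hr1 h
        have hr1e : r1 ^ α * r1 ^ (1-α) = r1 := by
          rw [← Real.rpow_add hr1, show α + (1-α) = (1:ℝ) by ring, Real.rpow_one]
        have hre : r ^ α * r ^ (1-α) = r := by
          rw [← Real.rpow_add hr0, show α + (1-α) = (1:ℝ) by ring, Real.rpow_one]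
        have key : r ^ α * r1 ≤ r1 ^ α * r := by
          calc r ^ α * r1 = r ^ α * (r1 ^ α * r1 ^ (1-α)) := by rw [hr1e]
            _ ≤ r ^ α * (r1 ^ α * r ^ (1-α)) := by
                have h2 := Real.rpow_le_rpow hr1.le h h1α.le
                gcongr
            _ = r1 ^ α * (r ^ α * r ^ (1-α)) := by ring
            _ = r1 ^ α * r := by rw [hre]
        have h3 : r ^ α ≤ (r1 ^ α / r1) * r := by
          rw [div_mul_eq_mul_div, le_div_iff₀ hr1]; linarith
        rw [hL_def, ← hr1α]
        linarith
  set C := Metric.diam (Set.univ : Set M) with hC_def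
  have hbd : ∀ t : M, -(C ^ α) ≤ F t := by
    intro t
    have h1 : |F t - F p| ≤ dist t p ^ α := hF t p
    have h2 : dist t p ≤ C :=
      Metric.dist_le_diam_of_mem isCompact_univ.isBounded (Set.mem_univ t) (Set.mem_univ p)
    have h3 : dist t p ^ α ≤ C ^ α := Real.rpow_le_rpow dist_nonneg h2 hα0.le
    rw [hFp] at h1
    have h4 := abs_le.mp h1
    linarith [h4.1]
  set f0 : M → ℝ := fun s => ⨅ t, (F t + g (dist s t)) with hf0_def
  have hbdd : ∀ s : M, BddBelow (Set.range fun t => F t + g (dist s t)) := by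
    intro s
    refine ⟨-(C ^ α), ?_⟩
    rintro x ⟨t, rfl⟩
    show -(C ^ α) ≤ F t + g (dist s t)
    have := g_nonneg (dist s t) dist_nonneg
    linarith [hbd t]
  have hf0_le : ∀ s, f0 s ≤ F s := by
    intro s
    have := ciInf_le (hbdd s) s
    simpa [dist_self, g0] using this
  have hf0_ge : ∀ s, F s - e ≤ f0 s := by
    intro s
    apply le_ciInf
    intro t
    have h1 := (abs_le.mp (hF s t)).2
    have h2 := rpow_le (dist s t) dist_nonneg
    linarith
  have hcore : ∀ s u : M, f0 s ≤ f0 u + g (dist s u) := by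
    intro s u
    rw [← sub_le_iff_le_add]
    apply le_ciInf
    intro t
    have h1 : f0 s ≤ F t + g (dist s t) := ciInf_le (hbdd s) t
    have h2 : g (dist s t) ≤ g (dist s u + dist u t) :=
      g_mono _ _ dist_nonneg (dist_triangle s u t)
    have h3 := g_subadd (dist s u) (dist u t) dist_nonneg dist_nonneg
    linarith
  have habs : ∀ s u : M, |f0 s - f0 u| ≤ g (dist s u) := by
    intro s u
    rw [abs_sub_le_iff]
    constructor
    · linarith [hcore s u]
    · have h := hcore u s
      rw [dist_comm u s] at h
      linarith
  refine ⟨fun s => f0 s - f0 p, by simp, ?_, ?_, ?_⟩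
  · intro s t
    simp only [sub_sub_sub_cancel_right]
    linarith [habs s t, g_le_rpow (dist s t)]
  · intro ε' hε'
    set c := (ε'/L) ^ ((1:ℝ)/(1-α)) with hc_def
    have hc : 0 < c := Real.rpow_pos_of_pos (div_pos hε' hL) _
    refine ⟨c ^ α, Real.rpow_pos_of_pos hc α, ?_⟩
    intro s t hst
    simp only [sub_sub_sub_cancel_right]
    have hd : dist s t ≤ c := by
      by_contra h
      push_neg at h
      exact absurd (Real.rpow_le_rpow hc.le h.le hα0.le) (not_le.mpr hst)
    rcases eq_or_lt_of_le (dist_nonneg : (0:ℝ) ≤ dist s t) with h0 | hd0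
    · have hd0' : dist s t = 0 := h0.symm
      have h6 := habs s t
      rw [hd0', g0] at h6
      rw [hd0', Real.zero_rpow hα0', mul_zero]
      linarith [abs_nonneg (f0 s - f0 t)]
    · have hcea : c ^ (1-α) = ε' / L := by
        rw [hc_def, ← Real.rpow_mul (div_pos hε' hL).le, one_div_mul_cancel h1α.ne',
          Real.rpow_one]
      have h4 : dist s t ^ (1-α) ≤ ε' / L :=
        hcea ▸ Real.rpow_le_rpow dist_nonneg hd h1α.le
      have hdd : dist s t ^ α * dist s t ^ (1-α) = dist s t := by
        rw [← Real.rpow_add hd0, show α + (1-α) = (1:ℝ) by ring, Real.rpow_one]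
      have hda : (0:ℝ) ≤ dist s t ^ α := Real.rpow_nonneg dist_nonneg α
      have h5 : L * dist s t ≤ ε' * dist s t ^ α := by
        calc L * dist s t = L * (dist s t ^ α * dist s t ^ (1-α)) := by rw [hdd]
          _ ≤ L * (dist s t ^ α * (ε'/L)) := by gcongr
          _ = ε' * dist s t ^ α := by field_simp
      linarith [habs s t, g_le_lin (dist s t)]
  · intro t
    have h1 : |f0 t - F t| ≤ e := abs_le.mpr ⟨by linarith [hf0_ge t], by linarith [hf0_le t]⟩
    have h2 : |f0 p| ≤ e := by
      have ha := hf0_le p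
      have hb := hf0_ge p
      rw [hFp] at ha hb
      exact abs_le.mpr ⟨by linarith, by linarith⟩
    calc |f0 t - f0 p - F t| ≤ |f0 t - F t| + |f0 p| := by
          rw [show f0 t - f0 p - F t = (f0 t - F t) + -(f0 p) by ring]
          exact (abs_add_le _ _).trans (by rw [abs_neg])
      _ ≤ e + e := add_le_add h1 h2
      _ = ε := by rw [he_def]; ring
end
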